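/- arXiv:1504.06902 — 2 statements merged into one kernel-verified Lean document; each statement's English description precedes it below -/
import Mathlib

section
/- Let c > 2, let K be a nonnegative integrable kernel with ∫_ℝ K = 1 and compact support, let β > 1 and b > 2β + 2. Write λ = λ(c) < μ = μ(c) for the positive roots of χ(z) = z² − cz + 1 = 0, and let φ₊ be a strictly increasing C² solution of φ₊'' − cφ₊' + g_β(φ₊) = 0 with limits 0 at −∞ and 2β at +∞. Choose ε ∈ (0, λ) with λ + ε < μ, assume L := sup_{t∈ℝ} φ₊(t)e^{−εt} < ∞, and let M > 0 satisfy −χ(λ + ε) > (L/M)∫_ℝ e^{−εs}K(s)ds. Define φ₋(t) = max{0, e^{λt}(1 − Me^{εt})} and let T_c be determined by Me^{εT_c} = 1, and assume 0 < φ₋(t) < φ₊(t) < e^{εt} < 1 for all t < T_c. Then every continuous φ : ℝ → ℝ with φ₋(t) ≤ φ(t) ≤ φ₊(t) for all t satisfies φ₋(t) ≤ (A_m φ)(t) ≤ φ₊(t) for all t ∈ ℝ. -/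
open Filter MeasureTheory Real Set
open Topology

noncomputable def conv (K φ : ℝ → ℝ) (t : ℝ) : ℝ := ∫ s, K s * φ (t - s)

noncomputable def gbeta (β u : ℝ) : ℝ := if u ≤ β then u else max 0 (2 * β - u)

noncomputable def zneg (c b : ℝ) : ℝ := (c - Real.sqrt (c ^ 2 + 4 * b)) / 2

noncomputable def zpos (c b : ℝ) : ℝ := (c + Real.sqrt (c ^ 2 + 4 * b)) / 2

noncomputable def rop (K : ℝ → ℝ) (β b : ℝ) (φ : ℝ → ℝ) (t : ℝ) : ℝ :=
  b * φ t + gbeta β (φ t) * (1 - conv K φ t)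

noncomputable def Am (K : ℝ → ℝ) (c β b : ℝ) (φ : ℝ → ℝ) (t : ℝ) : ℝ :=
  (1 / (zpos c b - zneg c b)) *
    ((∫ s in Iic t, Real.exp (zneg c b * (t - s)) * rop K β b φ s) +
     (∫ s in Ici t, Real.exp (zpos c b * (t - s)) * rop K β b φ s))

/-- `λ(c) = (c - √(c² - 4))/2`. -/
noncomputable def lam (c : ℝ) : ℝ := (c - Real.sqrt (c ^ 2 - 4)) / 2

/-- `μ(c) = (c + √(c² - 4))/2`. -/
noncomputable def mup (c : ℝ) : ℝ := (c + Real.sqrt (c ^ 2 - 4)) / 2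

/-- `χ(z) = z² - cz + 1`. -/
def chi (c z : ℝ) : ℝ := z ^ 2 - c * z + 1


section Helpers

lemma fun_prop_cont {f f' : ℝ → ℝ} (hd : ∀ s, HasDerivAt f (f' s) s) : Continuous f :=
  Differentiable.continuous (fun s => (hd s).differentiableAt)


lemma int_exp_Iic {k : ℝ} (hk : 0 < k) (t : ℝ) :
    IntegrableOn (fun s => Real.exp (k * s)) (Iic t) := by
  rw [integrableOn_Iic_iff_integrableOn_Iio]
  have h2 : Integrable ((Ioi (-t)).indicator fun x => Real.exp (-k * x)) :=
    (integrable_indicator_iff measurableSet_Ioi).2 (exp_neg_integrableOn_Ioi _ hk)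
  have h3 := h2.comp_neg
  have h4 : (fun s => ((Ioi (-t)).indicator fun x => Real.exp (-k * x)) (-s)) =
      (Iio t).indicator (fun s => Real.exp (k * s)) := by
    funext s
    by_cases hs : s < t
    · rw [indicator_of_mem (by simpa using hs), indicator_of_mem (by simpa using hs)]
      ring_nf
    · rw [indicator_of_notMem (by simpa using hs), indicator_of_notMem (by simpa using hs)]
  rw [← integrable_indicator_iff measurableSet_Iio, ← h4]
  exact h3

lemma int_exp_Ici {k : ℝ} (hk : k < 0) (t : ℝ) :
    IntegrableOn (fun s => Real.exp (k * s)) (Ici t) := by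
  rw [integrableOn_Ici_iff_integrableOn_Ioi]
  have := exp_neg_integrableOn_Ioi t (b := -k) (by linarith)
  simpa using this

lemma int_dom2_Iic {h : ℝ → ℝ} {D k₁ k₂ t : ℝ} (h1 : 0 < k₁) (h2 : 0 < k₂)
    (hm : AEStronglyMeasurable h (volume.restrict (Iic t)))
    (hb : ∀ s, |h s| ≤ D * (Real.exp (k₁ * s) + Real.exp (k₂ * s))) :
    IntegrableOn h (Iic t) := by
  refine Integrable.mono' (((int_exp_Iic h1 t).add (int_exp_Iic h2 t)).const_mul D) hm ?_
  exact ae_of_all _ fun s => by simpa [Real.norm_eq_abs] using hb s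

lemma int_dom2_Ici {h : ℝ → ℝ} {D k₁ k₂ t : ℝ} (h1 : k₁ < 0) (h2 : k₂ < 0)
    (hm : AEStronglyMeasurable h (volume.restrict (Ici t)))
    (hb : ∀ s, |h s| ≤ D * (Real.exp (k₁ * s) + Real.exp (k₂ * s))) :
    IntegrableOn h (Ici t) := by
  refine Integrable.mono' (((int_exp_Ici h1 t).add (int_exp_Ici h2 t)).const_mul D) hm ?_
  exact ae_of_all _ fun s => by simpa [Real.norm_eq_abs] using hb s

-- Green's identity, Iic part
lemma green_Iic {b c z a₁ a₂ C : ℝ} {f f' f'' : ℝ → ℝ}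
    (hz : z ^ 2 - c * z - b = 0)
    (hd1 : ∀ s, HasDerivAt f (f' s) s) (hd2 : ∀ s, HasDerivAt f' (f'' s) s)
    (hf''c : Continuous f'')
    (hza : z < a₁) (ha12 : a₁ ≤ a₂)
    (hbf : ∀ s, |f s| ≤ C * (Real.exp (a₁ * s) + Real.exp (a₂ * s)))
    (hbf' : ∀ s, |f' s| ≤ C * (Real.exp (a₁ * s) + Real.exp (a₂ * s)))
    (hbP : ∀ s, |b * f s + c * f' s - f'' s| ≤ C * (Real.exp (a₁ * s) + Real.exp (a₂ * s)))
    (t : ℝ) :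
    (∫ s in Iic t, Real.exp (z * (t - s)) * (b * f s + c * f' s - f'' s)) =
      (c - z) * f t - f' t := by
  set G : ℝ → ℝ := fun s => Real.exp (-z * s) * ((c - z) * f s - f' s) with hG
  have hGd : ∀ s, HasDerivAt G (Real.exp (-z * s) * (b * f s + c * f' s - f'' s)) s := by
    intro s
    have he : HasDerivAt (fun u : ℝ => Real.exp (-z * u)) (Real.exp (-z * s) * -z) s := by
      simpa using ((hasDerivAt_id s).const_mul (-z)).exp
    have hin : HasDerivAt (fun u => (c - z) * f u - f' u) ((c - z) * f' s - f'' s) s :=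
      ((hd1 s).const_mul (c - z)).sub (hd2 s)
    have := he.mul hin
    refine this.congr_deriv ?_
    linear_combination (Real.exp (-z * s) * f s) * hz
  have hC : 0 ≤ C := by
    have h0 := (abs_nonneg (f 0)).trans (hbf 0)
    nlinarith [Real.exp_pos (a₁ * (0:ℝ)), Real.exp_pos (a₂ * (0:ℝ))]
  have hfc : Continuous f := fun_prop_cont hd1
  have hfc' : Continuous f' := fun_prop_cont hd2
  have hPc : Continuous (fun s => b * f s + c * f' s - f'' s) := by
    exact ((continuous_const.mul hfc).add (continuous_const.mul hfc')).sub hf''c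
  have hk1 : (0:ℝ) < a₁ - z := by linarith
  have hk2 : (0:ℝ) < a₂ - z := by linarith
  have hexp_split : ∀ (a : ℝ) (s : ℝ),
      Real.exp ((a - z) * s) = Real.exp (a * s) * Real.exp (-z * s) := by
    intro a s; rw [← Real.exp_add]; ring_nf
  -- bound for the integrand exp(-z s) * P s
  have hPbound : ∀ s, |Real.exp (-z * s) * (b * f s + c * f' s - f'' s)| ≤
      C * (Real.exp ((a₁ - z) * s) + Real.exp ((a₂ - z) * s)) := by
    intro s
    rw [abs_mul, abs_of_pos (Real.exp_pos _), hexp_split, hexp_split]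
    have := mul_le_mul_of_nonneg_left (hbP s) (Real.exp_pos (-z * s)).le
    nlinarith [this]
  have hPint : IntegrableOn
      (fun s => Real.exp (-z * s) * (b * f s + c * f' s - f'' s)) (Iic t) := by
    refine int_dom2_Iic hk1 hk2 ?_ hPbound
    exact ((Real.continuous_exp.comp (continuous_const.mul continuous_id)).mul
      hPc).aestronglyMeasurable.restrict
  -- G tends to 0 at -∞
  have hGbound : ∀ s, ‖G s‖ ≤ ((|c - z| + 1) * C) *
      (Real.exp ((a₁ - z) * s) + Real.exp ((a₂ - z) * s)) := by
    intro s
    have hX : |(c - z) * f s - f' s| ≤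
        (|c - z| + 1) * (C * (Real.exp (a₁ * s) + Real.exp (a₂ * s))) := by
      have h1 := abs_sub ((c - z) * f s) (f' s)
      rw [abs_mul] at h1
      nlinarith [hbf s, hbf' s, abs_nonneg (c - z), abs_nonneg (f s), abs_nonneg (f' s),
        Real.exp_pos (a₁ * s), Real.exp_pos (a₂ * s),
        mul_le_mul_of_nonneg_left (hbf s) (abs_nonneg (c - z))]
    rw [Real.norm_eq_abs, hG]
    simp only
    rw [abs_mul, abs_of_pos (Real.exp_pos _), hexp_split, hexp_split]
    nlinarith [mul_le_mul_of_nonneg_left hX (Real.exp_pos (-z * s)).le]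
  have htd : Tendsto G atBot (𝓝 0) := by
    apply squeeze_zero_norm hGbound
    have t1 : Tendsto (fun s => Real.exp ((a₁ - z) * s)) atBot (𝓝 0) :=
      Real.tendsto_exp_atBot.comp ((tendsto_id (α := ℝ)).const_mul_atBot hk1)
    have t2 : Tendsto (fun s => Real.exp ((a₂ - z) * s)) atBot (𝓝 0) :=
      Real.tendsto_exp_atBot.comp ((tendsto_id (α := ℝ)).const_mul_atBot hk2)
    have := (t1.add t2).const_mul ((|c - z| + 1) * C)
    simpa using this
  have hGc : Continuous G := by
    have : Differentiable ℝ G := fun s => (hGd s).differentiableAt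
    exact this.continuous
  have hFTC := integral_Iic_of_hasDerivAt_of_tendsto (a := t)
    hGc.continuousWithinAt (fun x _ => hGd x) hPint htd
  have hrw : ∀ s, Real.exp (z * (t - s)) = Real.exp (z * t) * Real.exp (-z * s) := by
    intro s; rw [← Real.exp_add]; ring_nf
  calc (∫ s in Iic t, Real.exp (z * (t - s)) * (b * f s + c * f' s - f'' s))
      = ∫ s in Iic t, Real.exp (z * t) *
          (Real.exp (-z * s) * (b * f s + c * f' s - f'' s)) := by
        simp_rw [hrw]; simp_rw [mul_assoc]
    _ = Real.exp (z * t) *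
          ∫ s in Iic t, Real.exp (-z * s) * (b * f s + c * f' s - f'' s) :=
        integral_const_mul _ _
    _ = Real.exp (z * t) * (G t - 0) := by rw [hFTC]
    _ = (c - z) * f t - f' t := by
        rw [sub_zero, hG]
        simp only
        rw [← mul_assoc, ← Real.exp_add]
        simp

-- Green's identity, Ici part
lemma green_Ici {b c z a₁ a₂ C : ℝ} {f f' f'' : ℝ → ℝ}
    (hz : z ^ 2 - c * z - b = 0)
    (hd1 : ∀ s, HasDerivAt f (f' s) s) (hd2 : ∀ s, HasDerivAt f' (f'' s) s)
    (hf''c : Continuous f'')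
    (hza : a₂ < z) (ha12 : a₁ ≤ a₂)
    (hbf : ∀ s, |f s| ≤ C * (Real.exp (a₁ * s) + Real.exp (a₂ * s)))
    (hbf' : ∀ s, |f' s| ≤ C * (Real.exp (a₁ * s) + Real.exp (a₂ * s)))
    (hbP : ∀ s, |b * f s + c * f' s - f'' s| ≤ C * (Real.exp (a₁ * s) + Real.exp (a₂ * s)))
    (t : ℝ) :
    (∫ s in Ici t, Real.exp (z * (t - s)) * (b * f s + c * f' s - f'' s)) =
      f' t - (c - z) * f t := by
  set G : ℝ → ℝ := fun s => Real.exp (-z * s) * ((c - z) * f s - f' s) with hG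
  have hGd : ∀ s, HasDerivAt G (Real.exp (-z * s) * (b * f s + c * f' s - f'' s)) s := by
    intro s
    have he : HasDerivAt (fun u : ℝ => Real.exp (-z * u)) (Real.exp (-z * s) * -z) s := by
      simpa using ((hasDerivAt_id s).const_mul (-z)).exp
    have hin : HasDerivAt (fun u => (c - z) * f u - f' u) ((c - z) * f' s - f'' s) s :=
      ((hd1 s).const_mul (c - z)).sub (hd2 s)
    have := he.mul hin
    refine this.congr_deriv ?_
    linear_combination (Real.exp (-z * s) * f s) * hz
  have hC : 0 ≤ C := by
    have h0 := (abs_nonneg (f 0)).trans (hbf 0)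
    nlinarith [Real.exp_pos (a₁ * (0:ℝ)), Real.exp_pos (a₂ * (0:ℝ))]
  have hfc : Continuous f := fun_prop_cont hd1
  have hfc' : Continuous f' := fun_prop_cont hd2
  have hPc : Continuous (fun s => b * f s + c * f' s - f'' s) := by
    exact ((continuous_const.mul hfc).add (continuous_const.mul hfc')).sub hf''c
  have hk1 : a₁ - z < 0 := by linarith
  have hk2 : a₂ - z < 0 := by linarith
  have hexp_split : ∀ (a : ℝ) (s : ℝ),
      Real.exp ((a - z) * s) = Real.exp (a * s) * Real.exp (-z * s) := by
    intro a s; rw [← Real.exp_add]; ring_nf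
  have hPbound : ∀ s, |Real.exp (-z * s) * (b * f s + c * f' s - f'' s)| ≤
      C * (Real.exp ((a₁ - z) * s) + Real.exp ((a₂ - z) * s)) := by
    intro s
    rw [abs_mul, abs_of_pos (Real.exp_pos _), hexp_split, hexp_split]
    have := mul_le_mul_of_nonneg_left (hbP s) (Real.exp_pos (-z * s)).le
    nlinarith [this]
  have hPint : IntegrableOn
      (fun s => Real.exp (-z * s) * (b * f s + c * f' s - f'' s)) (Ici t) := by
    refine int_dom2_Ici hk1 hk2 ?_ hPbound
    exact ((Real.continuous_exp.comp (continuous_const.mul continuous_id)).mul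
      hPc).aestronglyMeasurable.restrict
  have hGbound : ∀ s, ‖G s‖ ≤ ((|c - z| + 1) * C) *
      (Real.exp ((a₁ - z) * s) + Real.exp ((a₂ - z) * s)) := by
    intro s
    have hX : |(c - z) * f s - f' s| ≤
        (|c - z| + 1) * (C * (Real.exp (a₁ * s) + Real.exp (a₂ * s))) := by
      have h1 := abs_sub ((c - z) * f s) (f' s)
      rw [abs_mul] at h1
      nlinarith [hbf s, hbf' s, abs_nonneg (c - z), abs_nonneg (f s), abs_nonneg (f' s),
        Real.exp_pos (a₁ * s), Real.exp_pos (a₂ * s),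
        mul_le_mul_of_nonneg_left (hbf s) (abs_nonneg (c - z))]
    rw [Real.norm_eq_abs, hG]
    simp only
    rw [abs_mul, abs_of_pos (Real.exp_pos _), hexp_split, hexp_split]
    nlinarith [mul_le_mul_of_nonneg_left hX (Real.exp_pos (-z * s)).le]
  have htd : Tendsto G atTop (𝓝 0) := by
    apply squeeze_zero_norm hGbound
    have t1 : Tendsto (fun s => Real.exp ((a₁ - z) * s)) atTop (𝓝 0) :=
      Real.tendsto_exp_atBot.comp (tendsto_id.const_mul_atTop_of_neg hk1)
    have t2 : Tendsto (fun s => Real.exp ((a₂ - z) * s)) atTop (𝓝 0) :=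
      Real.tendsto_exp_atBot.comp (tendsto_id.const_mul_atTop_of_neg hk2)
    have := (t1.add t2).const_mul ((|c - z| + 1) * C)
    simpa using this
  have hGc : Continuous G := by
    have : Differentiable ℝ G := fun s => (hGd s).differentiableAt
    exact this.continuous
  have hFTC := integral_Ioi_of_hasDerivAt_of_tendsto (a := t)
    hGc.continuousWithinAt (fun x _ => hGd x) (hPint.mono_set Ioi_subset_Ici_self) htd
  have hrw : ∀ s, Real.exp (z * (t - s)) = Real.exp (z * t) * Real.exp (-z * s) := by
    intro s; rw [← Real.exp_add]; ring_nf
  calc (∫ s in Ici t, Real.exp (z * (t - s)) * (b * f s + c * f' s - f'' s))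
      = ∫ s in Ici t, Real.exp (z * t) *
          (Real.exp (-z * s) * (b * f s + c * f' s - f'' s)) := by
        simp_rw [hrw]; simp_rw [mul_assoc]
    _ = Real.exp (z * t) *
          ∫ s in Ici t, Real.exp (-z * s) * (b * f s + c * f' s - f'' s) :=
        integral_const_mul _ _
    _ = Real.exp (z * t) * (0 - G t) := by rw [integral_Ici_eq_integral_Ioi, hFTC]
    _ = f' t - (c - z) * f t := by
        rw [zero_sub, hG]
        simp only
        rw [mul_neg, ← mul_assoc, ← Real.exp_add]
        simp

section Roots
variable {c b : ℝ}

lemma zneg_root (hb : 0 < b) : (zneg c b) ^ 2 - c * (zneg c b) - b = 0 := by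
  have hs : Real.sqrt (c ^ 2 + 4 * b) ^ 2 = c ^ 2 + 4 * b :=
    Real.sq_sqrt (by positivity)
  unfold zneg
  linear_combination (1/4) * hs

lemma zpos_root (hb : 0 < b) : (zpos c b) ^ 2 - c * (zpos c b) - b = 0 := by
  have hs : Real.sqrt (c ^ 2 + 4 * b) ^ 2 = c ^ 2 + 4 * b :=
    Real.sq_sqrt (by positivity)
  unfold zpos
  linear_combination (1/4) * hs

lemma zneg_neg (hb : 0 < b) : zneg c b < 0 := by
  have hs : Real.sqrt (c ^ 2 + 4 * b) ^ 2 = c ^ 2 + 4 * b :=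
    Real.sq_sqrt (by positivity)
  have hnn := Real.sqrt_nonneg (c ^ 2 + 4 * b)
  unfold zneg
  nlinarith

lemma zpos_pos (hb : 0 < b) : 0 < zpos c b := by
  have hs : Real.sqrt (c ^ 2 + 4 * b) ^ 2 = c ^ 2 + 4 * b :=
    Real.sq_sqrt (by positivity)
  have hnn := Real.sqrt_nonneg (c ^ 2 + 4 * b)
  unfold zpos
  nlinarith

lemma zdiff (hb : 0 < b) : zpos c b - zneg c b = Real.sqrt (c ^ 2 + 4 * b) := by
  unfold zpos zneg; ring

lemma zdiff_pos (hb : 0 < b) : 0 < zpos c b - zneg c b := by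
  rw [zdiff hb]
  have := zneg_neg (c := c) hb
  have := zpos_pos (c := c) hb
  have := Real.sqrt_nonneg (c ^ 2 + 4 * b)
  rcases this.lt_or_eq with h | h
  · exact h
  · exfalso
    have h2 : zpos c b - zneg c b = 0 := by rw [zdiff hb, ← h]
    linarith

end Roots

lemma green {b c a₁ a₂ C : ℝ} {f f' f'' : ℝ → ℝ} (hb : 0 < b)
    (hd1 : ∀ s, HasDerivAt f (f' s) s) (hd2 : ∀ s, HasDerivAt f' (f'' s) s)
    (hf''c : Continuous f'')
    (ha1 : zneg c b < a₁) (ha12 : a₁ ≤ a₂) (ha2 : a₂ < zpos c b)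
    (hbf : ∀ s, |f s| ≤ C * (Real.exp (a₁ * s) + Real.exp (a₂ * s)))
    (hbf' : ∀ s, |f' s| ≤ C * (Real.exp (a₁ * s) + Real.exp (a₂ * s)))
    (hbP : ∀ s, |b * f s + c * f' s - f'' s| ≤ C * (Real.exp (a₁ * s) + Real.exp (a₂ * s)))
    (t : ℝ) :
    (1 / (zpos c b - zneg c b)) *
      ((∫ s in Iic t, Real.exp (zneg c b * (t - s)) * (b * f s + c * f' s - f'' s)) +
       (∫ s in Ici t, Real.exp (zpos c b * (t - s)) * (b * f s + c * f' s - f'' s))) = f t := by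
  rw [green_Iic (zneg_root hb) hd1 hd2 hf''c ha1 ha12 hbf hbf' hbP t,
    green_Ici (zpos_root hb) hd1 hd2 hf''c ha2 ha12 hbf hbf' hbP t]
  have h0 := zdiff_pos (c := c) hb
  field_simp
  ring


section Gbeta
variable {β u v : ℝ}

lemma gbeta_nonneg (hu : 0 ≤ u) : 0 ≤ gbeta β u := by
  unfold gbeta; split
  · exact hu
  · exact le_max_left _ _

lemma gbeta_le_self (hu : 0 ≤ u) : gbeta β u ≤ u := by
  unfold gbeta; split
  · exact le_rfl
  · next h => exact max_le hu (by linarith [not_le.mp h])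

lemma gbeta_le_beta (hβ : 0 ≤ β) : gbeta β u ≤ β := by
  unfold gbeta; split
  · next h => exact h
  · next h => exact max_le hβ (by linarith [not_le.mp h])

lemma gbeta_eq (h : u ≤ β) : gbeta β u = u := if_pos h

lemma gbeta_lip (huv : u ≤ v) (hu : 0 ≤ u) : gbeta β u - gbeta β v ≤ v - u := by
  unfold gbeta
  split <;> split
  · linarith
  · next h1 h2 =>
    rcases le_total (2 * β - v) 0 with h | h
    · rw [max_eq_left h]; push_neg at h2; linarith
    · rw [max_eq_right h]; linarith
  · next h1 h2 => push_neg at h1; linarith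
  · next h1 h2 =>
    push_neg at h1; push_neg at h2
    rcases le_total (2 * β - v) 0 with h | h
    · rw [max_eq_left h, sub_zero]
      exact max_le (by linarith) (by linarith)
    · rw [max_eq_right h, max_eq_right (by linarith : (0:ℝ) ≤ 2 * β - u)]
      linarith

lemma bg_mono {b : ℝ} (hb : 1 ≤ b) (hu : 0 ≤ u) (huv : u ≤ v) :
    b * u + gbeta β u ≤ b * v + gbeta β v := by
  have h1 := gbeta_lip (β := β) huv hu
  nlinarith

lemma gbeta_cont (hβ : 0 ≤ β) : Continuous (gbeta β) := by
  unfold gbeta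
  apply Continuous.if_le continuous_id (continuous_const.max
    (continuous_const.sub continuous_id)) continuous_id continuous_const
  intro u hu
  simp only [id_eq] at hu
  subst hu
  simp only [id_eq, Pi.sub_apply]
  rw [show 2 * u - u = u by ring, max_eq_right hβ]

end Gbeta

section Lam
variable {c ε : ℝ}

lemma lam_root (hc : 2 < c) : (lam c) ^ 2 - c * lam c + 1 = 0 := by
  have hs : Real.sqrt (c ^ 2 - 4) ^ 2 = c ^ 2 - 4 := Real.sq_sqrt (by nlinarith)
  unfold lam
  linear_combination (1/4) * hs

lemma lam_pos (hc : 2 < c) : 0 < lam c := by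
  have hs : Real.sqrt (c ^ 2 - 4) ^ 2 = c ^ 2 - 4 := Real.sq_sqrt (by nlinarith)
  have hnn := Real.sqrt_nonneg (c ^ 2 - 4)
  unfold lam
  nlinarith

lemma mup_sub_lam : mup c - lam c = Real.sqrt (c ^ 2 - 4) := by
  unfold mup lam; ring

lemma mup_lt_zpos {b : ℝ} (hc : 2 < c) (hb : 0 < b) : mup c < zpos c b := by
  unfold mup zpos
  have : Real.sqrt (c ^ 2 - 4) < Real.sqrt (c ^ 2 + 4 * b) :=
    Real.sqrt_lt_sqrt (by nlinarith) (by linarith)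
  linarith

lemma chi_eq (hc : 2 < c) : chi c (lam c + ε) = ε * (ε - Real.sqrt (c ^ 2 - 4)) := by
  have hs : Real.sqrt (c ^ 2 - 4) ^ 2 = c ^ 2 - 4 := Real.sq_sqrt (by nlinarith)
  unfold chi lam
  linear_combination (1/4) * hs

end Lam


lemma conv_continuous {K φ : ℝ → ℝ} (hKi : Integrable K) (hφ : Continuous φ) {B : ℝ}
    (hB : ∀ u, |φ u| ≤ B) : Continuous (conv K φ) := by
  rw [continuous_iff_continuousAt]
  intro t
  apply continuousAt_of_dominated (bound := fun τ => |K τ| * B)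
  · filter_upwards with x
    exact hKi.aestronglyMeasurable.mul
      ((hφ.comp (continuous_const.sub continuous_id)).aestronglyMeasurable)
  · filter_upwards with x
    filter_upwards with τ
    rw [Real.norm_eq_abs, abs_mul]
    exact mul_le_mul_of_nonneg_left (hB _) (abs_nonneg _)
  · exact hKi.abs.mul_const B
  · filter_upwards with τ
    exact (continuous_const.mul (hφ.comp (continuous_id.sub continuous_const))).continuousAt

lemma kernel_exp_integrable {K : ℝ → ℝ} (hKi : Integrable K) (hKsupp : HasCompactSupport K)
    (ε : ℝ) : Integrable (fun τ => Real.exp (-ε * τ) * K τ) := by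
  obtain ⟨R, hR⟩ := hKsupp.isBounded.subset_closedBall 0
  refine Integrable.mono' (hKi.abs.const_mul (Real.exp (|ε| * R))) ?_ (ae_of_all _ ?_)
  · exact ((Real.continuous_exp.comp
      (continuous_const.mul continuous_id)).aestronglyMeasurable).mul
      hKi.aestronglyMeasurable
  · intro τ
    rw [Real.norm_eq_abs, abs_mul, abs_of_pos (Real.exp_pos _)]
    by_cases hmem : τ ∈ tsupport K
    · have h1 : |τ| ≤ R := by
        have := hR hmem
        simpa [Real.dist_eq] using this
    
      have h2 : -ε * τ ≤ |ε| * R := by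
        calc -ε * τ ≤ |(-ε) * τ| := le_abs_self _
          _ = |ε| * |τ| := by rw [abs_mul, abs_neg]
          _ ≤ |ε| * R := mul_le_mul_of_nonneg_left h1 (abs_nonneg _)
      exact mul_le_mul_of_nonneg_right (Real.exp_le_exp.2 h2) (abs_nonneg _)
    · rw [image_eq_zero_of_notMem_tsupport hmem]
      simp only [abs_zero, mul_zero]
      positivity

lemma kernel_int_Iic {z a₁ a₂ C t : ℝ} {h : ℝ → ℝ} (hcont : Continuous h)
    (hza : z < a₁) (ha12 : a₁ ≤ a₂)
    (hbnd : ∀ s, |h s| ≤ C * (Real.exp (a₁ * s) + Real.exp (a₂ * s))) :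
    IntegrableOn (fun s => Real.exp (z * (t - s)) * h s) (Iic t) := by
  have hexp_split : ∀ (a s : ℝ),
      Real.exp ((a - z) * s) = Real.exp (a * s) * Real.exp (-z * s) := by
    intro a s; rw [← Real.exp_add]; ring_nf
  refine int_dom2_Iic (D := Real.exp (z * t) * C) (by linarith : (0:ℝ) < a₁ - z)
    (by linarith : (0:ℝ) < a₂ - z) ?_ ?_
  · exact ((Real.continuous_exp.comp (continuous_const.mul
      (continuous_const.sub continuous_id))).mul hcont).aestronglyMeasurable.restrict
  · intro s
    have h1 : Real.exp (z * (t - s)) = Real.exp (z * t) * Real.exp (-z * s) := by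
      rw [← Real.exp_add]; ring_nf
    rw [abs_mul, abs_of_pos (Real.exp_pos _), h1, hexp_split, hexp_split]
    have h2 := mul_le_mul_of_nonneg_left (hbnd s) (Real.exp_pos (-z * s)).le
    nlinarith [Real.exp_pos (z * t), h2]

lemma kernel_int_Ici {z a₁ a₂ C t : ℝ} {h : ℝ → ℝ} (hcont : Continuous h)
    (hza : a₂ < z) (ha12 : a₁ ≤ a₂)
    (hbnd : ∀ s, |h s| ≤ C * (Real.exp (a₁ * s) + Real.exp (a₂ * s))) :
    IntegrableOn (fun s => Real.exp (z * (t - s)) * h s) (Ici t) := by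
  have hexp_split : ∀ (a s : ℝ),
      Real.exp ((a - z) * s) = Real.exp (a * s) * Real.exp (-z * s) := by
    intro a s; rw [← Real.exp_add]; ring_nf
  refine int_dom2_Ici (D := Real.exp (z * t) * C) (by linarith : a₁ - z < 0)
    (by linarith : a₂ - z < 0) ?_ ?_
  · exact ((Real.continuous_exp.comp (continuous_const.mul
      (continuous_const.sub continuous_id))).mul hcont).aestronglyMeasurable.restrict
  · intro s
    have h1 : Real.exp (z * (t - s)) = Real.exp (z * t) * Real.exp (-z * s) := by
      rw [← Real.exp_add]; ring_nf
    rw [abs_mul, abs_of_pos (Real.exp_pos _), h1, hexp_split, hexp_split]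
    have h2 := mul_le_mul_of_nonneg_left (hbnd s) (Real.exp_pos (-z * s)).le
    nlinarith [Real.exp_pos (z * t), h2]


end Helpers

set_option maxHeartbeats 1000000 in
/-- sub- and super-solution property of the pair `(φ₋, φ₊)` for
the operator `A_m`, for `c > 2` and compactly supported kernel. -/
theorem Am_sub_and_super_solution
    (K : ℝ → ℝ) (hKi : Integrable K)
    (hK0 : ∀ᵐ s ∂(volume : Measure ℝ), 0 ≤ K s)
    (hK1 : (∫ s, K s) = 1) (hKsupp : HasCompactSupport K)
    (c β b : ℝ) (hc : 2 < c) (hβ : 1 < β) (hb : 2 * β + 2 < b)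
    (φp : ℝ → ℝ) (hφpC : ContDiff ℝ 2 φp) (hφpMono : StrictMono φp)
    (hφpEq : ∀ t, deriv (deriv φp) t - c * deriv φp t + gbeta β (φp t) = 0)
    (hφpBot : Tendsto φp atBot (nhds 0))
    (hφpTop : Tendsto φp atTop (nhds (2 * β)))
    (ε : ℝ) (hε0 : 0 < ε) (heps1 : ε < lam c) (heps2 : lam c + ε < mup c)
    (L : ℝ) (hL : IsLUB (Set.range fun t => φp t * Real.exp (-ε * t)) L)
    (M : ℝ) (hM : 0 < M)
    (hMcond : (L / M) * (∫ s, Real.exp (-ε * s) * K s) < -(chi c (lam c + ε)))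
    (φm : ℝ → ℝ)
    (hφm : ∀ t, φm t = max 0 (Real.exp (lam c * t) * (1 - M * Real.exp (ε * t))))
    (Tc : ℝ) (hTc : M * Real.exp (ε * Tc) = 1)
    (horder : ∀ t, t < Tc →
      0 < φm t ∧ φm t < φp t ∧ φp t < Real.exp (ε * t) ∧ Real.exp (ε * t) < 1) :
    ∀ φ : ℝ → ℝ, Continuous φ → (∀ t, φm t ≤ φ t ∧ φ t ≤ φp t) →
      ∀ t, φm t ≤ Am K c β b φ t ∧ Am K c β b φ t ≤ φp t := by
  -- ====== basic numeric facts ======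
  have hb0 : (0:ℝ) < b := by linarith
  have hb1 : (1:ℝ) ≤ b := by linarith
  have hc0 : (0:ℝ) < c := by linarith
  have hβ0 : (0:ℝ) < β := by linarith
  have hlam_pos : 0 < lam c := lam_pos hc
  have hlam_root := lam_root hc
  have heps_s' : ε < Real.sqrt (c ^ 2 - 4) := by
    have h := mup_sub_lam (c := c); linarith
  have hchi_eqn : chi c (lam c + ε) = ε * (ε - Real.sqrt (c ^ 2 - 4)) := chi_eq hc
  have hchi_neg : chi c (lam c + ε) < 0 := by
    rw [hchi_eqn]; nlinarith
  have hs'eq : Real.sqrt (c ^ 2 - 4) = c - 2 * lam c := by unfold lam; ring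
  have hchi_lt1 : -(chi c (lam c + ε)) < 1 := by
    rw [hchi_eqn]
    nlinarith [mul_pos (sub_pos.2 heps1) (sub_pos.2 heps_s'), hlam_root, hs'eq,
      sq_nonneg (lam c), hlam_pos, hε0]
  have hz1 := zneg_root (c := c) hb0
  have hz2 := zpos_root (c := c) hb0
  have hzneg : zneg c b < 0 := zneg_neg hb0
  have hzpos : 0 < zpos c b := zpos_pos hb0
  have hz12 : 0 < zpos c b - zneg c b := zdiff_pos hb0
  have hlamz : lam c + ε < zpos c b := by
    have := mup_lt_zpos (c := c) hc hb0; linarith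
  -- ====== φp facts ======
  have hcd2 : ContDiff ℝ ((1 : WithTop ℕ∞) + 1) φp := by norm_num [hφpC]
  have hcd := contDiff_succ_iff_deriv.mp hcd2
  have hcd1 := contDiff_one_iff_deriv.mp hcd.2.2
  have hφpd : Differentiable ℝ φp := hcd.1
  set v := deriv φp with hvdef
  have hvd : ∀ s, HasDerivAt φp (v s) s := fun s => (hφpd s).hasDerivAt
  have hvdiff : Differentiable ℝ v := hcd1.1
  have hvd' : ∀ s, HasDerivAt v (deriv v s) s := fun s => (hvdiff s).hasDerivAt
  have hv'cont : Continuous (deriv v) := hcd1.2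
  have hveq : ∀ s, deriv v s = c * v s - gbeta β (φp s) := by
    intro s; have := hφpEq s; linarith
  have hφp_nonneg : ∀ u, 0 ≤ φp u := by
    intro u
    refine le_of_tendsto hφpBot ?_
    filter_upwards [eventually_le_atBot u] with s hs
    exact hφpMono.monotone hs
  have hφp_pos : ∀ u, 0 < φp u :=
    fun u => lt_of_le_of_lt (hφp_nonneg (u - 1)) (hφpMono (by linarith))
  have hφp_le : ∀ u, φp u ≤ 2 * β := by
    intro u
    refine ge_of_tendsto hφpTop ?_
    filter_upwards [eventually_ge_atTop u] with s hs
    exact hφpMono.monotone hs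
  have hφp_lt : ∀ u, φp u < 2 * β :=
    fun u => lt_of_lt_of_le (hφpMono (lt_add_one u)) (hφp_le (u + 1))
  have hL_ub : ∀ s, φp s ≤ L * Real.exp (ε * s) := by
    intro s
    have h := hL.1 (mem_range_self s)
    have h2 : Real.exp (-ε * s) * Real.exp (ε * s) = 1 := by
      rw [← Real.exp_add]; simp
    nlinarith [Real.exp_pos (ε * s), Real.exp_pos (-ε * s), hφp_pos s]
  have hL_pos : 0 < L := by
    have h := hL.1 (mem_range_self 0)
    simp only [mul_zero, neg_zero, Real.exp_zero, mul_one] at h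
    exact lt_of_lt_of_le (hφp_pos 0) h
  -- ====== bound on v ======
  have hv_nonneg : ∀ s, 0 ≤ v s := by
    intro s
    have h1 : Tendsto (slope φp s) (𝓝[>] s) (𝓝 (v s)) :=
      ((hasDerivAt_iff_tendsto_slope.mp (hvd s))).mono_left
        (nhdsWithin_mono s (fun x hx => ne_of_gt hx))
    refine ge_of_tendsto h1 ?_
    filter_upwards [self_mem_nhdsWithin] with x hx
    rw [slope_def_field]
    exact div_nonneg (sub_nonneg.2 (hφpMono.monotone hx.out.le)) (by linarith [hx.out])
  have hgφp_cont : Continuous (fun x => gbeta β (φp x)) := (gbeta_cont hβ0.le).comp hφpd.continuous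
  have hv_le : ∀ s, v s ≤ β / c := by
    set V : ℝ → ℝ := fun u => Real.exp (-c * u) * v u with hVdef
    have hVd : ∀ u, HasDerivAt V (-(Real.exp (-c * u) * gbeta β (φp u))) u := by
      intro u
      have he : HasDerivAt (fun x : ℝ => Real.exp (-c * x)) (Real.exp (-c * u) * -c) u := by
        simpa using ((hasDerivAt_id u).const_mul (-c)).exp
      have := he.mul (hvd' u)
      refine this.congr_deriv ?_
      rw [hveq u]; ring
    have hV_anti : Antitone V := by
      apply antitone_of_deriv_nonpos (fun u => (hVd u).differentiableAt)
      intro u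
      rw [(hVd u).deriv]
      exact neg_nonpos.2 (mul_nonneg (Real.exp_pos _).le (gbeta_nonneg (hφp_nonneg u)))
    have hV_nonneg : ∀ u, 0 ≤ V u :=
      fun u => mul_nonneg (Real.exp_pos _).le (hv_nonneg u)
    have hbdd : BddBelow (range V) := by
      refine ⟨0, ?_⟩
      rintro x ⟨u, rfl⟩
      exact hV_nonneg u
    have hVlim : Tendsto V atTop (𝓝 (⨅ u, V u)) := tendsto_atTop_ciInf hV_anti hbdd
    set l := ⨅ u, V u with hldef
    have hl_le : ∀ u, l ≤ V u := fun u => hV_anti.le_of_tendsto hVlim u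
    have hint1 : ∀ u T : ℝ, IntervalIntegrable
        (fun x => -(Real.exp (-c * x) * gbeta β (φp x))) volume u T :=
      fun u T => (((Real.continuous_exp.comp (continuous_const.mul
        continuous_id)).mul hgφp_cont).neg).intervalIntegrable u T
    have hint2 : ∀ u T : ℝ, IntervalIntegrable
        (fun x => -(β * Real.exp (-c * x))) volume u T :=
      fun u T => ((continuous_const.mul (Real.continuous_exp.comp
        (continuous_const.mul continuous_id))).neg).intervalIntegrable u T
    have hkey : ∀ u T, u ≤ T → V u ≤ V T + (β / c) * Real.exp (-c * u) := by
      intro u T huT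
      have hFTC : ∫ x in u..T, -(Real.exp (-c * x) * gbeta β (φp x)) = V T - V u :=
        intervalIntegral.integral_eq_sub_of_hasDerivAt (fun x _ => hVd x) (hint1 u T)
      have hW : ∀ x : ℝ, HasDerivAt (fun y : ℝ => (β / c) * Real.exp (-c * y))
          (-(β * Real.exp (-c * x))) x := by
        intro x
        have he : HasDerivAt (fun y : ℝ => Real.exp (-c * y)) (Real.exp (-c * x) * -c) x := by
          simpa using ((hasDerivAt_id x).const_mul (-c)).exp
        have := he.const_mul (β / c)
        refine this.congr_deriv ?_
        field_simp
      have hFTC2 : ∫ x in u..T, -(β * Real.exp (-c * x)) =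
          (β / c) * Real.exp (-c * T) - (β / c) * Real.exp (-c * u) :=
        intervalIntegral.integral_eq_sub_of_hasDerivAt (fun x _ => hW x) (hint2 u T)
      have hmono : (∫ x in u..T, -(β * Real.exp (-c * x))) ≤
          ∫ x in u..T, -(Real.exp (-c * x) * gbeta β (φp x)) := by
        apply intervalIntegral.integral_mono_on huT (hint2 u T) (hint1 u T)
        intro x _
        have h := mul_le_mul_of_nonneg_left (gbeta_le_beta (u := φp x) hβ0.le)
          (Real.exp_pos (-c * x)).le
        rw [neg_le_neg_iff, mul_comm β]
        exact h
      have hpos : 0 ≤ (β / c) * Real.exp (-c * T) := by positivity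
      rw [hFTC] at hmono
      rw [hFTC2] at hmono
      linarith
    have hl0 : l ≤ 0 := by
      by_contra hl
      push_neg at hl
      have hvl : ∀ u, l * Real.exp (c * u) ≤ v u := by
        intro u
        have h1 := hl_le u
        have h2 : Real.exp (-c * u) * Real.exp (c * u) = 1 := by
          rw [← Real.exp_add]; simp
        have h5 : V u * Real.exp (c * u) = v u := by
          calc V u * Real.exp (c * u) = (Real.exp (-c * u) * Real.exp (c * u)) * v u := by
                show (Real.exp (-c * u) * v u) * Real.exp (c * u) = _; ring
            _ = v u := by rw [h2]; ring
        have h6 := mul_le_mul_of_nonneg_right h1 (Real.exp_pos (c * u)).le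
        linarith
      have hgrow : ∀ T, 0 ≤ T → l / c * (Real.exp (c * T) - 1) ≤ 2 * β := by
        intro T hT
        have hFTC : ∫ x in (0:ℝ)..T, v x = φp T - φp 0 :=
          intervalIntegral.integral_eq_sub_of_hasDerivAt (fun x _ => hvd x)
            (hvdiff.continuous.intervalIntegrable 0 T)
        have hW2 : ∀ x : ℝ, HasDerivAt (fun y : ℝ => l / c * Real.exp (c * y))
            (l * Real.exp (c * x)) x := by
          intro x
          have he : HasDerivAt (fun y : ℝ => Real.exp (c * y)) (Real.exp (c * x) * c) x := by
            simpa using ((hasDerivAt_id x).const_mul c).exp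
          have := he.const_mul (l / c)
          refine this.congr_deriv ?_
          field_simp
        have hFTC2 : ∫ x in (0:ℝ)..T, l * Real.exp (c * x) =
            l / c * Real.exp (c * T) - l / c * Real.exp (c * 0) :=
          intervalIntegral.integral_eq_sub_of_hasDerivAt (fun x _ => hW2 x)
            ((continuous_const.mul (Real.continuous_exp.comp
              (continuous_const.mul continuous_id))).intervalIntegrable 0 T)
        have hmono : (∫ x in (0:ℝ)..T, l * Real.exp (c * x)) ≤ ∫ x in (0:ℝ)..T, v x :=
          intervalIntegral.integral_mono_on hT ((continuous_const.mul
            (Real.continuous_exp.comp (continuous_const.mul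
              continuous_id))).intervalIntegrable 0 T)
            (hvdiff.continuous.intervalIntegrable 0 T) (fun x _ => hvl x)
        rw [hFTC, hFTC2] at hmono
        simp only [mul_zero, Real.exp_zero, mul_one] at hmono
        have h3 := hφp_le T
        have h4 := hφp_nonneg 0
        linarith
      set T := Real.log (2 * β * c / l + 2) / c with hTdef
      have hX : (0:ℝ) < 2 * β * c / l + 2 := by positivity
      have hexpT : Real.exp (c * T) = 2 * β * c / l + 2 := by
        rw [show c * T = Real.log (2 * β * c / l + 2) by
          rw [hTdef]; field_simp]
        exact Real.exp_log hX
      have hT0 : 0 ≤ T := by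
        apply div_nonneg _ hc0.le
        apply Real.log_nonneg
        have : 0 ≤ 2 * β * c / l := by positivity
        linarith
      have hg := hgrow T hT0
      rw [hexpT] at hg
      have heq : l / c * (2 * β * c / l + 2 - 1) = 2 * β + l / c := by
        field_simp
        ring
      nlinarith [div_pos hl hc0]
    intro s
    have h1 : V s ≤ l + (β / c) * Real.exp (-c * s) := by
      have hlim2 : Tendsto (fun T => V T + (β / c) * Real.exp (-c * s)) atTop
          (𝓝 (l + (β / c) * Real.exp (-c * s))) := hVlim.add_const _
      refine ge_of_tendsto hlim2 ?_
      filter_upwards [eventually_ge_atTop s] with T hT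
      exact hkey s T hT
    have h2 : Real.exp (-c * s) * Real.exp (c * s) = 1 := by
      rw [← Real.exp_add]; simp
    have h3 : V s ≤ (β / c) * Real.exp (-c * s) := by linarith
    have h4 := mul_le_mul_of_nonneg_right h3 (Real.exp_pos (c * s)).le
    have h5 : V s * Real.exp (c * s) = v s := by
      calc V s * Real.exp (c * s) = (Real.exp (-c * s) * Real.exp (c * s)) * v s := by
            show (Real.exp (-c * s) * v s) * Real.exp (c * s) = _; ring
        _ = v s := by rw [h2]; ring
    have h6 : β / c * Real.exp (-c * s) * Real.exp (c * s) = β / c := by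
      rw [mul_assoc, h2]; ring
    linarith
  -- ====== kernel and convolution facts ======
  have hKexp : Integrable (fun τ => Real.exp (-ε * τ) * K τ) :=
    kernel_exp_integrable hKi hKsupp ε
  have hIε_nonneg : 0 ≤ ∫ τ, Real.exp (-ε * τ) * K τ := by
    apply integral_nonneg_of_ae
    filter_upwards [hK0] with τ h
    exact mul_nonneg (Real.exp_pos _).le h
  intro φ hφc hφb t
  have hφ_nonneg : ∀ s, 0 ≤ φ s := by
    intro s
    have h := (hφb s).1
    rw [hφm s] at h
    exact le_trans (le_max_left _ _) h
  have hφ_le2β : ∀ s, φ s ≤ 2 * β := fun s => le_trans (hφb s).2 (hφp_le s)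
  have hφ_abs : ∀ s, |φ s| ≤ 2 * β := fun s => by
    rw [abs_of_nonneg (hφ_nonneg s)]; exact hφ_le2β s
  have hconv_int : ∀ u, Integrable (fun τ => K τ * φ (u - τ)) := by
    intro u
    refine Integrable.mono' (hKi.abs.mul_const (2 * β))
      (hKi.aestronglyMeasurable.mul
        ((hφc.comp (continuous_const.sub continuous_id)).aestronglyMeasurable))
      (ae_of_all _ ?_)
    intro τ
    rw [Real.norm_eq_abs, abs_mul]
    exact mul_le_mul_of_nonneg_left (hφ_abs _) (abs_nonneg _)
  have hconv_nonneg : ∀ u, 0 ≤ conv K φ u := by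
    intro u
    apply integral_nonneg_of_ae
    filter_upwards [hK0] with τ h
    exact mul_nonneg h (hφ_nonneg _)
  have hconv_le2β : ∀ u, conv K φ u ≤ 2 * β := by
    intro u
    have h1 : conv K φ u ≤ ∫ τ, K τ * (2 * β) := by
      apply integral_mono_ae (hconv_int u) (hKi.mul_const _)
      filter_upwards [hK0] with τ h
      exact mul_le_mul_of_nonneg_left (hφ_le2β _) h
    rwa [integral_mul_const, hK1, one_mul] at h1
  have hconv_exp : ∀ u, conv K φ u ≤
      (L * (∫ τ, Real.exp (-ε * τ) * K τ)) * Real.exp (ε * u) := by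
    intro u
    have heq : (fun τ => K τ * (L * Real.exp (ε * (u - τ)))) =
        fun τ => (L * Real.exp (ε * u)) * (Real.exp (-ε * τ) * K τ) := by
      funext τ
      rw [show ε * (u - τ) = ε * u + (-ε * τ) by ring, Real.exp_add]
      ring
    have h1 : conv K φ u ≤ ∫ τ, K τ * (L * Real.exp (ε * (u - τ))) := by
      apply integral_mono_ae (hconv_int u) (by rw [heq]; exact hKexp.const_mul _)
      filter_upwards [hK0] with τ h
      exact mul_le_mul_of_nonneg_left (le_trans (hφb _).2 (hL_ub _)) h
    have h2 : (∫ τ, K τ * (L * Real.exp (ε * (u - τ)))) =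
        (L * Real.exp (ε * u)) * ∫ τ, Real.exp (-ε * τ) * K τ := by
      rw [heq]; exact integral_const_mul _ _
    rw [h2] at h1
    calc conv K φ u ≤ (L * Real.exp (ε * u)) * ∫ τ, Real.exp (-ε * τ) * K τ := h1
      _ = (L * (∫ τ, Real.exp (-ε * τ) * K τ)) * Real.exp (ε * u) := by ring
  -- ====== facts about r ======
  set r := rop K β b φ with hrdef
  have hr_eq : ∀ s, r s = b * φ s + gbeta β (φ s) * (1 - conv K φ s) := fun s => rfl
  have hr_cont : Continuous r := by
    rw [hrdef]; unfold rop
    exact (continuous_const.mul hφc).add (((gbeta_cont hβ0.le).comp hφc).mul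
      (continuous_const.sub (conv_continuous hKi hφc hφ_abs)))
  have hr_nonneg : ∀ s, 0 ≤ r s := by
    intro s
    rw [hr_eq]
    have hg0 : 0 ≤ gbeta β (φ s) := gbeta_nonneg (hφ_nonneg s)
    rcases le_total (conv K φ s) 1 with h | h
    · have h4 : 0 ≤ gbeta β (φ s) * (1 - conv K φ s) :=
        mul_nonneg hg0 (by linarith)
      linarith only [h4, mul_nonneg hb0.le (hφ_nonneg s)]
    · have h1 : gbeta β (φ s) ≤ φ s := gbeta_le_self (hφ_nonneg s)
      have h2 : conv K φ s ≤ 2 * β := hconv_le2β s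
      have m1 : gbeta β (φ s) * conv K φ s ≤ gbeta β (φ s) * (2 * β) :=
        mul_le_mul_of_nonneg_left h2 hg0
      have m2 : (2 * β - 1) * gbeta β (φ s) ≤ (2 * β - 1) * φ s :=
        mul_le_mul_of_nonneg_left h1 (by linarith)
      have m3 : 0 ≤ (b - 2 * β + 1) * φ s := mul_nonneg (by linarith) (hφ_nonneg s)
      nlinarith only [m1, m2, m3]
  have hr_abs : ∀ s, |r s| ≤ b * (2 * β) + β * (1 + 2 * β) := by
    intro s
    rw [hr_eq]
    have hg0 : 0 ≤ gbeta β (φ s) := gbeta_nonneg (hφ_nonneg s)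
    have h1 : |gbeta β (φ s) * (1 - conv K φ s)| ≤ β * (1 + 2 * β) := by
      rw [abs_mul]
      have hg : |gbeta β (φ s)| ≤ β := by
        rw [abs_of_nonneg hg0]; exact gbeta_le_beta hβ0.le
      have hc' : |1 - conv K φ s| ≤ 1 + 2 * β := by
        rw [abs_le]
        constructor
        · linarith [hconv_le2β s]
        · linarith [hconv_nonneg s]
      exact mul_le_mul hg hc' (abs_nonneg _) hβ0.le
    have h2 : |b * φ s| ≤ b * (2 * β) := by
      rw [abs_mul, abs_of_pos hb0, abs_of_nonneg (hφ_nonneg s)]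
      exact mul_le_mul_of_nonneg_left (hφ_le2β s) hb0.le
    calc |b * φ s + gbeta β (φ s) * (1 - conv K φ s)|
        ≤ |b * φ s| + |gbeta β (φ s) * (1 - conv K φ s)| := abs_add_le _ _
      _ ≤ b * (2 * β) + β * (1 + 2 * β) := by linarith
  -- ====== the functions w, w1, w2 ======
  set w : ℝ → ℝ := fun u => Real.exp (lam c * u) - M * Real.exp ((lam c + ε) * u) with hwdef
  set w1 : ℝ → ℝ := fun u => lam c * Real.exp (lam c * u) -
    M * ((lam c + ε) * Real.exp ((lam c + ε) * u)) with hw1def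
  set w2 : ℝ → ℝ := fun u => lam c * (lam c * Real.exp (lam c * u)) -
    M * ((lam c + ε) * ((lam c + ε) * Real.exp ((lam c + ε) * u))) with hw2def
  have hexp_d : ∀ (k u : ℝ),
      HasDerivAt (fun x : ℝ => Real.exp (k * x)) (k * Real.exp (k * u)) u := by
    intro k u
    simpa [mul_comm] using ((hasDerivAt_id u).const_mul k).exp
  have hwd : ∀ u, HasDerivAt w (w1 u) u := fun u =>
    (hexp_d (lam c) u).sub ((hexp_d (lam c + ε) u).const_mul M)
  have hwd1 : ∀ u, HasDerivAt w1 (w2 u) u := fun u =>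
    ((hexp_d (lam c) u).const_mul (lam c)).sub
      (((hexp_d (lam c + ε) u).const_mul (lam c + ε)).const_mul M)
  have hw2c : Continuous w2 := by
    rw [hw2def]
    exact (continuous_const.mul (continuous_const.mul (Real.continuous_exp.comp
      (continuous_const.mul continuous_id)))).sub (continuous_const.mul
      (continuous_const.mul (continuous_const.mul (Real.continuous_exp.comp
      (continuous_const.mul continuous_id)))))
  have hwc : Continuous w := Differentiable.continuous (fun u => (hwd u).differentiableAt)
  have hw1c : Continuous w1 := Differentiable.continuous (fun u => (hwd1 u).differentiableAt)
  have hq_eq : ∀ s, b * w s + c * w1 s - w2 s =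
      (b + 1) * w s + M * chi c (lam c + ε) * Real.exp ((lam c + ε) * s) := by
    intro s
    simp only [hwdef, hw1def, hw2def, chi]
    linear_combination (-(Real.exp (lam c * s))) * hlam_root
  have hwm_eq : ∀ s, Real.exp (lam c * s) * (1 - M * Real.exp (ε * s)) = w s := by
    intro s
    simp only [hwdef]
    rw [show (lam c + ε) * s = lam c * s + ε * s by ring, Real.exp_add]
    ring
  -- ====== pointwise comparisons ======
  have hrp : ∀ s, r s ≤ b * φp s + c * v s - deriv v s := by
    intro s
    have hg0 : 0 ≤ gbeta β (φ s) := gbeta_nonneg (hφ_nonneg s)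
    have h1 : gbeta β (φ s) * (1 - conv K φ s) ≤ gbeta β (φ s) := by
      nlinarith only [hconv_nonneg s, hg0]
    have h2 : b * φ s + gbeta β (φ s) ≤ b * φp s + gbeta β (φp s) :=
      bg_mono hb1 (hφ_nonneg s) (hφb s).2
    have h3 : b * φp s + gbeta β (φp s) = b * φp s + c * v s - deriv v s := by
      rw [hveq s]; ring
    rw [hr_eq]
    linarith only [h1, h2, h3]
  have hqr : ∀ s, b * w s + c * w1 s - w2 s ≤ r s := by
    intro s
    rw [hq_eq s]
    rcases lt_or_ge s Tc with hsT | hsT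
    · obtain ⟨h0m, hmp, hpe, he1⟩ := horder s hsT
      have hφle : φ s ≤ φp s := (hφb s).2
      have hφβ : φ s ≤ β := by linarith
      have hg : gbeta β (φ s) = φ s := gbeta_eq hφβ
      have hws_le : w s ≤ φ s := by
        have h1 : w s ≤ φm s := by
          rw [hφm s, hwm_eq s]
          exact le_max_right _ _
        linarith [(hφb s).1]
      have hMes : M * Real.exp (ε * s) < 1 := by
        have h2 : Real.exp (ε * s) < Real.exp (ε * Tc) :=
          Real.exp_lt_exp.2 (by nlinarith only [hsT, hε0])
        nlinarith only [h2, hTc, hM, Real.exp_pos (ε * Tc)]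
      have hconvs := hconv_exp s
      set A := L * (∫ τ, Real.exp (-ε * τ) * K τ) with hAdef
      have hA0 : 0 ≤ A := mul_nonneg hL_pos.le hIε_nonneg
      have hAM : A < M * (-(chi c (lam c + ε))) := by
        have h := hMcond
        rw [div_mul_eq_mul_div, div_lt_iff₀ hM] at h
        rw [hAdef]; linarith [h]
      have hwle : w s ≤ Real.exp (lam c * s) := by
        simp only [hwdef]
        nlinarith only [Real.exp_pos ((lam c + ε) * s), hM]
      have hsplit : Real.exp (lam c * s) * Real.exp (ε * s) =
          Real.exp ((lam c + ε) * s) := by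
        rw [← Real.exp_add]; ring_nf
      have c1 : φ s * conv K φ s ≤ φ s * (A * Real.exp (ε * s)) :=
        mul_le_mul_of_nonneg_left hconvs (hφ_nonneg s)
      have c3 : w s * (A * Real.exp (ε * s)) ≤
          M * (-(chi c (lam c + ε))) * Real.exp ((lam c + ε) * s) := by
        have b1 : w s * (A * Real.exp (ε * s)) ≤
            Real.exp (lam c * s) * (A * Real.exp (ε * s)) :=
          mul_le_mul_of_nonneg_right hwle (mul_nonneg hA0 (Real.exp_pos _).le)
        have b2 : Real.exp (lam c * s) * (A * Real.exp (ε * s)) =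
            A * Real.exp ((lam c + ε) * s) := by
          rw [← hsplit]; ring
        have b3 : A * Real.exp ((lam c + ε) * s) ≤
            M * (-(chi c (lam c + ε))) * Real.exp ((lam c + ε) * s) :=
          mul_le_mul_of_nonneg_right hAM.le (Real.exp_pos _).le
        linarith only [b1, b2, b3]
      have hAe1 : A * Real.exp (ε * s) ≤ 1 := by
        have d1 : A * (M * Real.exp (ε * s)) ≤ A * 1 :=
          mul_le_mul_of_nonneg_left hMes.le hA0
        have d2 : M * (-(chi c (lam c + ε))) < M * 1 :=
          mul_lt_mul_of_pos_left hchi_lt1 hM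
        have d3 : M * (A * Real.exp (ε * s)) ≤ M * 1 := by
          calc M * (A * Real.exp (ε * s)) = A * (M * Real.exp (ε * s)) := by ring
            _ ≤ A * 1 := d1
            _ = A := mul_one A
            _ ≤ M * 1 := by linarith only [hAM, d2]
        exact le_of_mul_le_mul_left d3 hM
      have c4 : (φ s - w s) * (A * Real.exp (ε * s)) ≤ (φ s - w s) * 1 :=
        mul_le_mul_of_nonneg_left hAe1 (by linarith [hws_le])
      have c5 : 0 ≤ b * (φ s - w s) := mul_nonneg hb0.le (by linarith [hws_le])
      rw [hr_eq, hg]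
      nlinarith only [c1, c3, c4, c5]
    · have h1 : 1 ≤ M * Real.exp (ε * s) := by
        have h2 : Real.exp (ε * Tc) ≤ Real.exp (ε * s) :=
          Real.exp_le_exp.2 (by nlinarith only [hsT, hε0])
        nlinarith only [h2, hTc, hM, Real.exp_pos (ε * Tc)]
      have hw0 : w s ≤ 0 := by
        have h3 := hwm_eq s
        nlinarith only [h3, h1, Real.exp_pos (lam c * s)]
      have h4 : M * chi c (lam c + ε) * Real.exp ((lam c + ε) * s) ≤ 0 :=
        mul_nonpos_of_nonpos_of_nonneg
          (mul_nonpos_of_nonneg_of_nonpos hM.le hchi_neg.le) (Real.exp_pos _).le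
      have h5 : (b + 1) * w s ≤ 0 :=
        mul_nonpos_of_nonneg_of_nonpos (by linarith only [hb0]) hw0
      linarith only [hr_nonneg s, h4, h5]
  -- ====== Green identities ======
  have hbφp : ∀ s, |φp s| ≤ (2 * β + β / c + (b * (2 * β) + β)) *
      (Real.exp (0 * s) + Real.exp (0 * s)) := by
    intro s
    rw [zero_mul, Real.exp_zero, abs_of_nonneg (hφp_nonneg s)]
    have hx1 : (0:ℝ) ≤ β / c := by positivity
    have hx2 : (0:ℝ) ≤ b * (2 * β) + β := by positivity
    linarith only [hφp_le s, hx1, hx2, hφp_nonneg s, hβ0]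
  have hbv : ∀ s, |v s| ≤ (2 * β + β / c + (b * (2 * β) + β)) *
      (Real.exp (0 * s) + Real.exp (0 * s)) := by
    intro s
    rw [zero_mul, Real.exp_zero, abs_of_nonneg (hv_nonneg s)]
    have hx1 : (0:ℝ) ≤ β / c := by positivity
    have hx2 : (0:ℝ) ≤ b * (2 * β) + β := by positivity
    linarith only [hv_le s, hβ0, hx1, hx2, hv_nonneg s]
  have hbp : ∀ s, |b * φp s + c * v s - deriv v s| ≤ (2 * β + β / c + (b * (2 * β) + β)) *
      (Real.exp (0 * s) + Real.exp (0 * s)) := by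
    intro s
    have heq2 : b * φp s + c * v s - deriv v s = b * φp s + gbeta β (φp s) := by
      rw [hveq s]; ring
    rw [heq2, zero_mul, Real.exp_zero, abs_of_nonneg (add_nonneg
      (mul_nonneg hb0.le (hφp_nonneg s)) (gbeta_nonneg (hφp_nonneg s)))]
    have hx1 : (0:ℝ) ≤ β / c := by positivity
    have hx3 := mul_le_mul_of_nonneg_left (hφp_le s) hb0.le
    have hx4 : gbeta β (φp s) ≤ β := gbeta_le_beta hβ0.le
    linarith only [hx1, hx3, hx4, hβ0, mul_nonneg hb0.le (hφp_nonneg s),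
      gbeta_nonneg (β := β) (hφp_nonneg s)]
  have hgreen_p := green hb0 hvd hvd' hv'cont hzneg (le_refl (0:ℝ)) hzpos hbφp hbv hbp t
  -- bounds for w
  set Cw := (b + 1) * (1 + M) + M + lam c + M * (lam c + ε) + 1 with hCwdef
  have hCe1 : (0:ℝ) < (b + 1) * (1 + M) := by positivity
  have hCe2 : (0:ℝ) < M * (lam c + ε) := mul_pos hM (by linarith)
  have hCw1 : (1:ℝ) + M ≤ Cw := by rw [hCwdef]; linarith only [hlam_pos, hCe1, hCe2]
  have hwtri : ∀ s, |w s| ≤ Real.exp (lam c * s) + M * Real.exp ((lam c + ε) * s) := by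
    intro s
    simp only [hwdef]
    calc |Real.exp (lam c * s) - M * Real.exp ((lam c + ε) * s)| ≤
        |Real.exp (lam c * s)| + |M * Real.exp ((lam c + ε) * s)| := abs_sub _ _
      _ = Real.exp (lam c * s) + M * Real.exp ((lam c + ε) * s) := by
          rw [abs_of_pos (Real.exp_pos _), abs_mul, abs_of_pos hM,
            abs_of_pos (Real.exp_pos _)]
  have hw_abs : ∀ s, |w s| ≤ Cw * (Real.exp (lam c * s) + Real.exp ((lam c + ε) * s)) := by
    intro s
    have e1 := (Real.exp_pos (lam c * s)).le
    have e2 := (Real.exp_pos ((lam c + ε) * s)).le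
    have m1 : 0 ≤ (Cw - 1) * Real.exp (lam c * s) :=
      mul_nonneg (by linarith only [hCw1, hM]) e1
    have m2 : 0 ≤ (Cw - M) * Real.exp ((lam c + ε) * s) :=
      mul_nonneg (by linarith only [hCw1, hM]) e2
    linarith only [hwtri s, m1, m2]
  have hw1_abs : ∀ s, |w1 s| ≤ Cw * (Real.exp (lam c * s) + Real.exp ((lam c + ε) * s)) := by
    intro s
    have e1 := (Real.exp_pos (lam c * s)).le
    have e2 := (Real.exp_pos ((lam c + ε) * s)).le
    have h1 : |w1 s| ≤ lam c * Real.exp (lam c * s) +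
        M * ((lam c + ε) * Real.exp ((lam c + ε) * s)) := by
      simp only [hw1def]
      calc |lam c * Real.exp (lam c * s) - M * ((lam c + ε) * Real.exp ((lam c + ε) * s))|
          ≤ |lam c * Real.exp (lam c * s)| +
            |M * ((lam c + ε) * Real.exp ((lam c + ε) * s))| := abs_sub _ _
        _ = lam c * Real.exp (lam c * s) +
            M * ((lam c + ε) * Real.exp ((lam c + ε) * s)) := by
            rw [abs_mul, abs_mul, abs_mul, abs_of_pos hlam_pos, abs_of_pos hM,
              abs_of_pos (show (0:ℝ) < lam c + ε by linarith), abs_of_pos (Real.exp_pos _),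
              abs_of_pos (Real.exp_pos _)]
    have m1 : 0 ≤ (Cw - lam c) * Real.exp (lam c * s) :=
      mul_nonneg (by rw [hCwdef]; linarith only [hCe1, hCe2, hM]) e1
    have m2 : 0 ≤ (Cw - M * (lam c + ε)) * Real.exp ((lam c + ε) * s) :=
      mul_nonneg (by rw [hCwdef]; linarith only [hCe1, hM, hlam_pos]) e2
    linarith only [h1, m1, m2]
  have hq_abs : ∀ s, |b * w s + c * w1 s - w2 s| ≤
      Cw * (Real.exp (lam c * s) + Real.exp ((lam c + ε) * s)) := by
    intro s
    rw [hq_eq s]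
    have e1 := (Real.exp_pos (lam c * s)).le
    have e2 := (Real.exp_pos ((lam c + ε) * s)).le
    have h1 : |(b + 1) * w s + M * chi c (lam c + ε) * Real.exp ((lam c + ε) * s)| ≤
        (b + 1) * |w s| + M * (-(chi c (lam c + ε))) * Real.exp ((lam c + ε) * s) := by
      calc |(b + 1) * w s + M * chi c (lam c + ε) * Real.exp ((lam c + ε) * s)|
          ≤ |(b + 1) * w s| + |M * chi c (lam c + ε) * Real.exp ((lam c + ε) * s)| :=
            abs_add_le _ _
        _ = (b + 1) * |w s| + M * (-(chi c (lam c + ε))) * Real.exp ((lam c + ε) * s) := by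
            rw [abs_mul, abs_mul, abs_mul, abs_of_pos (show (0:ℝ) < b + 1 by linarith),
              abs_of_pos hM, abs_of_neg hchi_neg, abs_of_pos (Real.exp_pos _)]
    have h2 := hwtri s
    have mono1 : 0 ≤ b * M := mul_nonneg hb0.le hM.le
    have mono2 : 0 ≤ M * lam c := mul_nonneg hM.le hlam_pos.le
    have mono3 : 0 ≤ M * ε := mul_nonneg hM.le hε0.le
    have m1 : 0 ≤ (Cw - (b + 1)) * Real.exp (lam c * s) :=
      mul_nonneg (by rw [hCwdef]; nlinarith only [mono1, mono2, mono3, hM, hlam_pos]) e1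
    have mchi : M * (-(chi c (lam c + ε))) ≤ M * 1 :=
      mul_le_mul_of_nonneg_left hchi_lt1.le hM.le
    have m2 : 0 ≤ (Cw - ((b + 1) * M + M * (-(chi c (lam c + ε))))) *
        Real.exp ((lam c + ε) * s) := by
      apply mul_nonneg _ e2
      rw [hCwdef]
      nlinarith only [mchi, mono1, mono2, mono3, hM, hlam_pos, hb0]
    have h3 : (b + 1) * |w s| ≤ (b + 1) * (Real.exp (lam c * s) +
        M * Real.exp ((lam c + ε) * s)) :=
      mul_le_mul_of_nonneg_left h2 (by linarith only [hb0])
    nlinarith only [h1, h3, m1, m2]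
  have hzlam : zneg c b < lam c := lt_trans hzneg hlam_pos
  have hlamle : lam c ≤ lam c + ε := by linarith
  have hgreen_w := green hb0 hwd hwd1 hw2c hzlam hlamle hlamz hw_abs hw1_abs hq_abs t
  -- ====== integrability of kernel integrands ======
  have hp_cont : Continuous (fun s => b * φp s + c * v s - deriv v s) :=
    ((continuous_const.mul hφpd.continuous).add
      (continuous_const.mul hvdiff.continuous)).sub hv'cont
  have hq_cont : Continuous (fun s => b * w s + c * w1 s - w2 s) :=
    ((continuous_const.mul hwc).add (continuous_const.mul hw1c)).sub hw2c
  have hr_absC : ∀ s, |r s| ≤ (b * (2 * β) + β * (1 + 2 * β)) *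
      (Real.exp (0 * s) + Real.exp (0 * s)) := by
    intro s
    rw [zero_mul, Real.exp_zero]
    have h0 : 0 ≤ b * (2 * β) + β * (1 + 2 * β) := le_trans (abs_nonneg _) (hr_abs s)
    linarith only [hr_abs s, h0]
  have hIic_r : IntegrableOn (fun s => Real.exp (zneg c b * (t - s)) * r s) (Iic t) :=
    kernel_int_Iic hr_cont hzneg (le_refl (0:ℝ)) hr_absC
  have hIci_r : IntegrableOn (fun s => Real.exp (zpos c b * (t - s)) * r s) (Ici t) :=
    kernel_int_Ici hr_cont hzpos (le_refl (0:ℝ)) hr_absC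
  have hIic_p : IntegrableOn (fun s => Real.exp (zneg c b * (t - s)) *
      (b * φp s + c * v s - deriv v s)) (Iic t) :=
    kernel_int_Iic hp_cont hzneg (le_refl (0:ℝ)) hbp
  have hIci_p : IntegrableOn (fun s => Real.exp (zpos c b * (t - s)) *
      (b * φp s + c * v s - deriv v s)) (Ici t) :=
    kernel_int_Ici hp_cont hzpos (le_refl (0:ℝ)) hbp
  have hIic_q : IntegrableOn (fun s => Real.exp (zneg c b * (t - s)) *
      (b * w s + c * w1 s - w2 s)) (Iic t) :=
    kernel_int_Iic hq_cont hzlam hlamle hq_abs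
  have hIci_q : IntegrableOn (fun s => Real.exp (zpos c b * (t - s)) *
      (b * w s + c * w1 s - w2 s)) (Ici t) :=
    kernel_int_Ici hq_cont hlamz hlamle hq_abs
  -- ====== assembly ======
  have hAm : Am K c β b φ t = (1 / (zpos c b - zneg c b)) *
      ((∫ s in Iic t, Real.exp (zneg c b * (t - s)) * r s) +
       (∫ s in Ici t, Real.exp (zpos c b * (t - s)) * r s)) := rfl
  have hfrac : 0 ≤ 1 / (zpos c b - zneg c b) := by positivity
  constructor
  · rw [hφm t]
    apply max_le
    · rw [hAm]
      apply mul_nonneg hfrac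
      apply add_nonneg
      · exact setIntegral_nonneg measurableSet_Iic
          (fun s _ => mul_nonneg (Real.exp_pos _).le (hr_nonneg s))
      · exact setIntegral_nonneg measurableSet_Ici
          (fun s _ => mul_nonneg (Real.exp_pos _).le (hr_nonneg s))
    · rw [hwm_eq t, hAm, ← hgreen_w]
      apply mul_le_mul_of_nonneg_left _ hfrac
      apply add_le_add
      · exact setIntegral_mono_on hIic_q hIic_r measurableSet_Iic
          (fun s _ => mul_le_mul_of_nonneg_left (hqr s) (Real.exp_pos _).le)
      · exact setIntegral_mono_on hIci_q hIci_r measurableSet_Ici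
          (fun s _ => mul_le_mul_of_nonneg_left (hqr s) (Real.exp_pos _).le)
  · rw [hAm, ← hgreen_p]
    apply mul_le_mul_of_nonneg_left _ hfrac
    apply add_le_add
    · exact setIntegral_mono_on hIic_r hIic_p measurableSet_Iic
        (fun s _ => mul_le_mul_of_nonneg_left (hrp s) (Real.exp_pos _).le)
    · exact setIntegral_mono_on hIci_r hIci_p measurableSet_Ici
        (fun s _ => mul_le_mul_of_nonneg_left (hrp s) (Real.exp_pos _).le)
end

section
/- Let τ > 0, let φ₀ : ℝ → ℝ be a strictly increasing solution of φ₀'(t) = φ₀(t − τ)(1 − φ₀(t)) with lim_{t→−∞} φ₀(t) = 0 and lim_{t→+∞} φ₀(t) = 1, and let 𝔪 = (μ₁, μ₂) with μ₁ < 0 < μ₂ < 1. Define (L_φ₀ y)(t) = (1 + φ₀(t − τ)) y(t) + (φ₀(t) − 1) y(t − τ), (D y)(t) = y'(t) − y(t), (T y)(t) = y'(t) − y(t) + (L_φ₀ y)(t), and (J w)(t) = w(t) − ∫_t^{+∞} e^{t−s}(L_φ₀ w)(s) ds. Then: (i) D, T : C¹_𝔪 → C_𝔪 and J : C_𝔪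 → C_𝔪 are bounded linear operators, with |D y|_𝔪 ≤ |y|_{1,𝔪}, |T y|_𝔪 ≤ (3 + e^{−μ₁τ})|y|_{1,𝔪}, and |J y|_𝔪 ≤ (3 + (2 + e^{−μ₁τ})/(1 − μ₂) + e^{−μ₁τ})|y|_𝔪; (ii) D is a bijection from C¹_𝔪 onto C_𝔪, with inverse (D^{−1}y)(t) = −∫_t^{+∞} e^{t−s} y(s) ds satisfying |D^{−1}y|_{1,𝔪} ≤ (3 + 2/(1 − μ₂))|y|_𝔪; (iii) T y = D(J y) for every y ∈ C¹_𝔪. -/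
open Filter MeasureTheory Real Set

def wIic (μ₂ : ℝ) (y : ℝ → ℝ) : Set ℝ := (fun s => Real.exp (-μ₂ * s) * |y s|) '' Iic 0

def wIci (μ₁ : ℝ) (y : ℝ → ℝ) : Set ℝ := (fun s => Real.exp (-μ₁ * s) * |y s|) '' Ici 0

/-- The `C_𝔪`-norm `|y|_𝔪`, `𝔪 = (μ₁, μ₂)`. -/
noncomputable def Cnorm (μ₁ μ₂ : ℝ) (y : ℝ → ℝ) : ℝ := sSup (wIic μ₂ y) + sSup (wIci μ₁ y)

/-- Membership in `C_𝔪`. -/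
def memCm (μ₁ μ₂ : ℝ) (y : ℝ → ℝ) : Prop :=
  Continuous y ∧ BddAbove (wIic μ₂ y) ∧ BddAbove (wIci μ₁ y)

/-- Membership in `C¹_𝔪`. -/
def memC1m (μ₁ μ₂ : ℝ) (y : ℝ → ℝ) : Prop :=
  memCm μ₁ μ₂ y ∧ Differentiable ℝ y ∧ memCm μ₁ μ₂ (deriv y)

/-- The `C¹_𝔪`-norm `|y|_{1,𝔪} = |y|_𝔪 + |y'|_𝔪`. -/
noncomputable def C1norm (μ₁ μ₂ : ℝ) (y : ℝ → ℝ) : ℝ :=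
  Cnorm μ₁ μ₂ y + Cnorm μ₁ μ₂ (deriv y)

/-- `(L_φ₀ y)(t) = (1 + φ₀(t-τ)) y(t) + (φ₀(t) - 1) y(t-τ)`. -/
def Lop (τ : ℝ) (φ₀ y : ℝ → ℝ) (t : ℝ) : ℝ :=
  (1 + φ₀ (t - τ)) * y t + (φ₀ t - 1) * y (t - τ)

/-- `(D y)(t) = y'(t) - y(t)`. -/
noncomputable def Dop (y : ℝ → ℝ) (t : ℝ) : ℝ := deriv y t - y t

/-- `(T y)(t) = y'(t) - y(t) + (L_φ₀ y)(t)`. -/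
noncomputable def Topr (τ : ℝ) (φ₀ y : ℝ → ℝ) (t : ℝ) : ℝ :=
  deriv y t - y t + Lop τ φ₀ y t

/-- `(J w)(t) = w(t) - ∫_t^{+∞} e^{t-s} (L_φ₀ w)(s) ds`. -/
noncomputable def Jop (τ : ℝ) (φ₀ w : ℝ → ℝ) (t : ℝ) : ℝ :=
  w t - ∫ s in Ici t, Real.exp (t - s) * Lop τ φ₀ w s

/-- `(D⁻¹ g)(t) = -∫_t^{+∞} e^{t-s} g(s) ds`. -/
noncomputable def Dinv (g : ℝ → ℝ) (t : ℝ) : ℝ :=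
  -∫ s in Ici t, Real.exp (t - s) * g s

lemma expOn (c a : ℝ) (hc : c < 0) : IntegrableOn (fun s => Real.exp (c*s)) (Ici a) := by
  rw [integrableOn_Ici_iff_integrableOn_Ioi]
  simpa [neg_neg] using exp_neg_integrableOn_Ioi a (b := -c) (by linarith)

lemma expVal (c a : ℝ) (hc : c < 0) :
    (∫ s in Ici a, Real.exp (c*s)) = Real.exp (c*a)/(-c) := by
  rw [MeasureTheory.integral_Ici_eq_integral_Ioi]
  have hd : ∀ x ∈ Ici a, HasDerivAt (fun s => Real.exp (c*s)/c) (Real.exp (c*x)) x := by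
    intro x _
    simpa [mul_comm, hc.ne] using (((hasDerivAt_id x).const_mul c).exp.div_const c)
  have ht : Tendsto (fun s => Real.exp (c*s)/c) atTop (nhds 0) := by
    have : Tendsto (fun s : ℝ => Real.exp (c*s)) atTop (nhds 0) :=
      tendsto_exp_atBot.comp (tendsto_id.const_mul_atTop_of_neg hc)
    simpa using this.div_const c
  have := integral_Ioi_of_hasDerivAt_of_tendsto' hd
    ((expOn c a hc).mono Ioi_subset_Ici_self le_rfl) ht
  rw [this]; ring

theorem memCm_of_bounds {μ₁ μ₂ A B : ℝ} {f : ℝ → ℝ} (hf : Continuous f)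
    (hA : ∀ s ≤ 0, |f s| ≤ A * Real.exp (μ₂*s))
    (hB : ∀ s, 0 ≤ s → |f s| ≤ B * Real.exp (μ₁*s)) :
    memCm μ₁ μ₂ f ∧ sSup (wIic μ₂ f) ≤ A ∧ sSup (wIci μ₁ f) ≤ B ∧
      Cnorm μ₁ μ₂ f ≤ A + B := by
  have h1 : ∀ x ∈ wIic μ₂ f, x ≤ A := by
    rintro x ⟨s, hs, rfl⟩
    have := hA s hs
    calc Real.exp (-μ₂*s) * |f s| ≤ Real.exp (-μ₂*s) * (A * Real.exp (μ₂*s)) := by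
          exact mul_le_mul_of_nonneg_left this (Real.exp_pos _).le
      _ = A := by rw [← mul_assoc, mul_comm (Real.exp _), mul_assoc, ← Real.exp_add]; simp
  have h2 : ∀ x ∈ wIci μ₁ f, x ≤ B := by
    rintro x ⟨s, hs, rfl⟩
    have := hB s hs
    calc Real.exp (-μ₁*s) * |f s| ≤ Real.exp (-μ₁*s) * (B * Real.exp (μ₁*s)) := by
          exact mul_le_mul_of_nonneg_left this (Real.exp_pos _).le
      _ = B := by rw [← mul_assoc, mul_comm (Real.exp _), mul_assoc, ← Real.exp_add]; simp
  have ne1 : (wIic μ₂ f).Nonempty := ⟨_, 0, self_mem_Iic, rfl⟩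
  have ne2 : (wIci μ₁ f).Nonempty := ⟨_, 0, self_mem_Ici, rfl⟩
  have s1 := csSup_le ne1 h1
  have s2 := csSup_le ne2 h2
  exact ⟨⟨hf, ⟨A, h1⟩, ⟨B, h2⟩⟩, s1, s2, add_le_add s1 s2⟩

theorem bounds_of_memCm {μ₁ μ₂ : ℝ} {f : ℝ → ℝ} (h : memCm μ₁ μ₂ f) :
    (∀ s ≤ 0, |f s| ≤ sSup (wIic μ₂ f) * Real.exp (μ₂ * s)) ∧
    (∀ s, 0 ≤ s → |f s| ≤ sSup (wIci μ₁ f) * Real.exp (μ₁ * s)) ∧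
    0 ≤ sSup (wIic μ₂ f) ∧ 0 ≤ sSup (wIci μ₁ f) := by
  obtain ⟨-, hb1, hb2⟩ := h
  have key1 : ∀ s ≤ 0, Real.exp (-μ₂*s) * |f s| ≤ sSup (wIic μ₂ f) :=
    fun s hs => le_csSup hb1 ⟨s, hs, rfl⟩
  have key2 : ∀ s, 0 ≤ s → Real.exp (-μ₁*s) * |f s| ≤ sSup (wIci μ₁ f) :=
    fun s hs => le_csSup hb2 ⟨s, hs, rfl⟩
  have pos1 : (0:ℝ) ≤ sSup (wIic μ₂ f) :=
    le_trans (by positivity) (key1 0 le_rfl)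
  have pos2 : (0:ℝ) ≤ sSup (wIci μ₁ f) :=
    le_trans (by positivity) (key2 0 le_rfl)
  refine ⟨fun s hs => ?_, fun s hs => ?_, pos1, pos2⟩
  · have := mul_le_mul_of_nonneg_right (key1 s hs) (Real.exp_pos (μ₂*s)).le
    calc |f s| = Real.exp (-μ₂*s) * |f s| * Real.exp (μ₂*s) := by
          rw [mul_comm (Real.exp (-μ₂*s)) _, mul_assoc, ← Real.exp_add]; simp
      _ ≤ sSup (wIic μ₂ f) * Real.exp (μ₂ * s) := this
  · have := mul_le_mul_of_nonneg_right (key2 s hs) (Real.exp_pos (μ₁*s)).le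
    calc |f s| = Real.exp (-μ₁*s) * |f s| * Real.exp (μ₁*s) := by
          rw [mul_comm (Real.exp (-μ₁*s)) _, mul_assoc, ← Real.exp_add]; simp
      _ ≤ sSup (wIci μ₁ f) * Real.exp (μ₁ * s) := this

lemma Ici_split {h : ℝ → ℝ} {a b : ℝ} (hint : IntegrableOn h (Ici a)) (hab : a ≤ b) :
    (∫ s in Ici a, h s) = (∫ s in a..b, h s) + ∫ s in Ici b, h s := by
  rw [MeasureTheory.integral_Ici_eq_integral_Ioi,
    MeasureTheory.integral_Ici_eq_integral_Ioi,
    intervalIntegral.integral_of_le hab, ← Ioc_union_Ioi_eq_Ioi hab,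
    MeasureTheory.setIntegral_union]
  · exact Set.disjoint_left.mpr (fun x hx hx' => absurd hx.2 (not_le.mpr hx'))
  · exact measurableSet_Ioi
  · exact hint.mono (fun x hx => le_of_lt hx.1) le_rfl
  · exact hint.mono (fun x hx => hab.trans (le_of_lt hx)) le_rfl

lemma Phi_eq {h : ℝ → ℝ} (hint : ∀ t, IntegrableOn h (Ici t)) (t : ℝ) :
    (∫ s in Ici t, h s) = (∫ s in Ici (0:ℝ), h s) - ∫ s in (0:ℝ)..t, h s := by
  rcases le_total (0:ℝ) t with h0 | h0
  · rw [Ici_split (hint 0) h0]; ring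
  · rw [Ici_split (hint t) h0, intervalIntegral.integral_symm]; ring

lemma Dinv_repr {g : ℝ → ℝ} (t : ℝ) :
    Dinv g t = -(Real.exp t * ∫ s in Ici t, Real.exp (-s) * g s) := by
  rw [Dinv, ← MeasureTheory.integral_const_mul]
  congr 1
  refine MeasureTheory.setIntegral_congr_fun measurableSet_Ici (fun s _ => ?_)
  rw [← mul_assoc, ← Real.exp_add]
  ring_nf

theorem Dinv_hasDerivAt {g : ℝ → ℝ} (hg : Continuous g)
    (hint : ∀ t, IntegrableOn (fun s => Real.exp (-s) * g s) (Ici t)) (t : ℝ) :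
    HasDerivAt (Dinv g) (Dinv g t + g t) t := by
  set h : ℝ → ℝ := fun s => Real.exp (-s) * g s with hh
  have hhc : Continuous h := by continuity
  set C : ℝ := ∫ s in Ici (0:ℝ), h s with hC
  have hrepr : ∀ u, Dinv g u = -(Real.exp u * (C - ∫ s in (0:ℝ)..u, h s)) := by
    intro u
    rw [Dinv_repr, Phi_eq hint]
  have hG : HasDerivAt (fun u => ∫ s in (0:ℝ)..u, h s) (h t) t :=
    intervalIntegral.integral_hasDerivAt_right (hhc.intervalIntegrable _ _)
      (hhc.stronglyMeasurable.stronglyMeasurableAtFilter) hhc.continuousAt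
  have hF : HasDerivAt (fun u => -(Real.exp u * (C - ∫ s in (0:ℝ)..u, h s)))
      (-(Real.exp t * (C - ∫ s in (0:ℝ)..t, h s)) + g t) t := by
    have := ((Real.hasDerivAt_exp t).mul ((hasDerivAt_const t C).sub hG)).neg
    refine this.congr_deriv ?_
    have : Real.exp t * h t = g t := by
      rw [hh]; simp only [← mul_assoc, ← Real.exp_add]; simp
    simp only [Pi.sub_apply]
    linear_combination this
  have hfun : Dinv g = fun u => -(Real.exp u * (C - ∫ s in (0:ℝ)..u, h s)) := funext hrepr
  rw [hfun]
  simpa using hF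

theorem Dinv_bounds {μ₁ μ₂ A B : ℝ} {g : ℝ → ℝ} (hμ₁ : μ₁ < 0) (hμ₂0 : 0 < μ₂)
    (hμ₂1 : μ₂ < 1) (hg : Continuous g) (hA0 : 0 ≤ A) (hB0 : 0 ≤ B)
    (hA : ∀ s ≤ 0, |g s| ≤ A * Real.exp (μ₂*s))
    (hB : ∀ s, 0 ≤ s → |g s| ≤ B * Real.exp (μ₁*s)) :
    (∀ t, IntegrableOn (fun s => Real.exp (-s) * g s) (Ici t)) ∧
    (∀ t ≤ 0, |Dinv g t| ≤ (A/(1-μ₂) + B) * Real.exp (μ₂*t)) ∧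
    (∀ t, 0 ≤ t → |Dinv g t| ≤ B * Real.exp (μ₁*t)) := by
  have h21 : μ₂ - 1 < 0 := by linarith
  have h11 : μ₁ - 1 < 0 := by linarith
  set h : ℝ → ℝ := fun s => Real.exp (-s) * g s with hh
  have hhc : Continuous h := by continuity
  set M : ℝ → ℝ := fun s => A * Real.exp ((μ₂-1)*s)
      + (Ici (0:ℝ)).indicator (fun s => B * Real.exp ((μ₁-1)*s)) s with hM
  have hM1int : ∀ t, IntegrableOn (fun s => A * Real.exp ((μ₂-1)*s)) (Ici t) :=
    fun t => (expOn _ t h21).const_mul A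
  have hM2int : ∀ t, IntegrableOn
      ((Ici (0:ℝ)).indicator (fun s => B * Real.exp ((μ₁-1)*s))) (Ici t) :=
    fun t => ((expOn _ t h11).const_mul B).indicator measurableSet_Ici
  have hMint : ∀ t, IntegrableOn M (Ici t) := fun t => (hM1int t).add (hM2int t)
  have hptw : ∀ s, |h s| ≤ M s := by
    intro s
    rcases le_total s 0 with hs | hs
    · have : |h s| ≤ A * Real.exp ((μ₂-1)*s) := by
        rw [hh, abs_mul, Real.abs_exp]
        calc Real.exp (-s) * |g s| ≤ Real.exp (-s) * (A * Real.exp (μ₂*s)) :=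
              mul_le_mul_of_nonneg_left (hA s hs) (Real.exp_pos _).le
          _ = A * Real.exp ((μ₂-1)*s) := by
              rw [← mul_assoc, mul_comm (Real.exp (-s)) A, mul_assoc, ← Real.exp_add,
                show -s + μ₂*s = (μ₂-1)*s by ring]
      refine le_trans this ?_
      have hnn : 0 ≤ (Ici (0:ℝ)).indicator (fun s => B * Real.exp ((μ₁-1)*s)) s :=
        Set.indicator_nonneg (fun x _ => by positivity) s
      show A * Real.exp ((μ₂-1)*s)
        ≤ A * Real.exp ((μ₂-1)*s) + (Ici (0:ℝ)).indicator (fun s => B * Real.exp ((μ₁-1)*s)) s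
      linarith
    · have heq : (Ici (0:ℝ)).indicator (fun s => B * Real.exp ((μ₁-1)*s)) s
          = B * Real.exp ((μ₁-1)*s) := Set.indicator_of_mem hs _
      have : |h s| ≤ B * Real.exp ((μ₁-1)*s) := by
        rw [hh, abs_mul, Real.abs_exp]
        calc Real.exp (-s) * |g s| ≤ Real.exp (-s) * (B * Real.exp (μ₁*s)) :=
              mul_le_mul_of_nonneg_left (hB s hs) (Real.exp_pos _).le
          _ = B * Real.exp ((μ₁-1)*s) := by
              rw [← mul_assoc, mul_comm (Real.exp (-s)) B, mul_assoc, ← Real.exp_add,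
                show -s + μ₁*s = (μ₁-1)*s by ring]
      refine le_trans this ?_
      show B * Real.exp ((μ₁-1)*s)
        ≤ A * Real.exp ((μ₂-1)*s) + (Ici (0:ℝ)).indicator (fun s => B * Real.exp ((μ₁-1)*s)) s
      rw [heq]
      have : 0 ≤ A * Real.exp ((μ₂-1)*s) := by positivity
      linarith
  have hint : ∀ t, IntegrableOn h (Ici t) := by
    intro t
    refine (hMint t).mono' (hhc.aestronglyMeasurable.restrict) ?_
    exact Filter.Eventually.of_forall (fun s => hptw s)
  refine ⟨hint, ?_, ?_⟩
  · -- t ≤ 0 case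
    intro t ht
    have habs : |Dinv g t| ≤ Real.exp t * ∫ s in Ici t, M s := by
      rw [Dinv_repr, abs_neg, abs_mul, Real.abs_exp]
      refine mul_le_mul_of_nonneg_left ?_ (Real.exp_pos _).le
      calc |∫ s in Ici t, h s| ≤ ∫ s in Ici t, |h s| := by
            simpa using MeasureTheory.norm_integral_le_integral_norm (μ := volume.restrict (Ici t)) h
        _ ≤ ∫ s in Ici t, M s := by
            refine MeasureTheory.integral_mono ((hint t).abs) (hMint t) hptw
    have hMval : (∫ s in Ici t, M s)
        = A * (Real.exp ((μ₂-1)*t)/(1-μ₂)) + B * (1/(1-μ₁)) := by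
      have h1 : (∫ s in Ici t, A * Real.exp ((μ₂-1)*s))
          = A * (Real.exp ((μ₂-1)*t)/(1-μ₂)) := by
        rw [MeasureTheory.integral_const_mul, expVal _ _ h21, show -(μ₂-1) = 1-μ₂ by ring]
      have h2 : (∫ s in Ici t, (Ici (0:ℝ)).indicator (fun s => B * Real.exp ((μ₁-1)*s)) s)
          = B * (1/(1-μ₁)) := by
        rw [MeasureTheory.integral_indicator measurableSet_Ici,
          MeasureTheory.Measure.restrict_restrict measurableSet_Ici,
          show Ici (0:ℝ) ∩ Ici t = Ici (0:ℝ) by rw [Set.Ici_inter_Ici]; simp [ht],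
          MeasureTheory.integral_const_mul, expVal _ _ h11, show -(μ₁-1) = 1-μ₁ by ring]
        norm_num
      calc (∫ s in Ici t, M s)
          = ∫ s in Ici t, (A * Real.exp ((μ₂-1)*s)
            + (Ici (0:ℝ)).indicator (fun s => B * Real.exp ((μ₁-1)*s)) s) := rfl
        _ = A * (Real.exp ((μ₂-1)*t)/(1-μ₂)) + B * (1/(1-μ₁)) := by
            rw [MeasureTheory.integral_add (hM1int t) (hM2int t), h1, h2]
    have e1 : Real.exp t * (A * (Real.exp ((μ₂-1)*t)/(1-μ₂)))
        = A/(1-μ₂) * Real.exp (μ₂*t) := by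
      have hee : Real.exp t * Real.exp ((μ₂-1)*t) = Real.exp (μ₂*t) := by
        rw [← Real.exp_add, show t + (μ₂-1)*t = μ₂*t by ring]
      rw [← hee]; ring
    have e2 : Real.exp t * (B * (1/(1-μ₁))) ≤ B * Real.exp (μ₂*t) := by
      have h1 : Real.exp t ≤ Real.exp (μ₂*t) := by
        apply Real.exp_le_exp.mpr; nlinarith
      have h2 : B * (1/(1-μ₁)) ≤ B := by
        have : 1/(1-μ₁) ≤ 1 := by
          rw [div_le_one (by linarith)]; linarith
        nlinarith
      calc Real.exp t * (B * (1/(1-μ₁))) ≤ Real.exp (μ₂*t) * B := by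
            apply mul_le_mul h1 h2
              (mul_nonneg hB0 (div_pos one_pos (by linarith : (0:ℝ) < 1-μ₁)).le)
              (Real.exp_pos _).le
        _ = B * Real.exp (μ₂*t) := mul_comm _ _
    calc |Dinv g t| ≤ Real.exp t * ∫ s in Ici t, M s := habs
      _ = Real.exp t * (A * (Real.exp ((μ₂-1)*t)/(1-μ₂)))
          + Real.exp t * (B * (1/(1-μ₁))) := by rw [hMval]; ring
      _ ≤ A/(1-μ₂) * Real.exp (μ₂*t) + B * Real.exp (μ₂*t) := by
          rw [e1]; exact add_le_add le_rfl e2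
      _ = (A/(1-μ₂) + B) * Real.exp (μ₂*t) := by ring
  · -- t ≥ 0 case
    intro t ht
    have hptw' : ∀ s ∈ Ici t, |h s| ≤ B * Real.exp ((μ₁-1)*s) := by
      intro s hs
      have hs0 : 0 ≤ s := le_trans ht hs
      rw [hh, abs_mul, Real.abs_exp]
      calc Real.exp (-s) * |g s| ≤ Real.exp (-s) * (B * Real.exp (μ₁*s)) :=
            mul_le_mul_of_nonneg_left (hB s hs0) (Real.exp_pos _).le
        _ = B * Real.exp ((μ₁-1)*s) := by
            rw [← mul_assoc, mul_comm (Real.exp (-s)) B, mul_assoc, ← Real.exp_add,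
              show -s + μ₁*s = (μ₁-1)*s by ring]
    have habs : |Dinv g t| ≤ Real.exp t * ∫ s in Ici t, B * Real.exp ((μ₁-1)*s) := by
      rw [Dinv_repr, abs_neg, abs_mul, Real.abs_exp]
      refine mul_le_mul_of_nonneg_left ?_ (Real.exp_pos _).le
      calc |∫ s in Ici t, h s| ≤ ∫ s in Ici t, |h s| := by
            simpa using MeasureTheory.norm_integral_le_integral_norm (μ := volume.restrict (Ici t)) h
        _ ≤ ∫ s in Ici t, B * Real.exp ((μ₁-1)*s) := by
            refine MeasureTheory.setIntegral_mono_on ((hint t).abs) ((expOn _ t h11).const_mul B)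
              measurableSet_Ici hptw'
    have hval : (∫ s in Ici t, B * Real.exp ((μ₁-1)*s)) = B * (Real.exp ((μ₁-1)*t)/(1-μ₁)) := by
      rw [MeasureTheory.integral_const_mul, expVal _ _ h11, show -(μ₁-1) = 1-μ₁ by ring]
    have e3 : Real.exp t * (B * (Real.exp ((μ₁-1)*t)/(1-μ₁))) ≤ B * Real.exp (μ₁*t) := by
      have : Real.exp t * Real.exp ((μ₁-1)*t) = Real.exp (μ₁*t) := by
        rw [← Real.exp_add, show t + (μ₁-1)*t = μ₁*t by ring]
      have h1μ : (1:ℝ) ≤ 1 - μ₁ := by linarith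
      rw [div_eq_mul_inv, show Real.exp t * (B * (Real.exp ((μ₁-1)*t) * (1-μ₁)⁻¹))
        = B * (Real.exp t * Real.exp ((μ₁-1)*t)) * (1-μ₁)⁻¹ by ring, this]
      have hinv : (1-μ₁)⁻¹ ≤ 1 := by
        rw [inv_le_one_iff₀]; right; linarith
      nlinarith [Real.exp_pos (μ₁*t), mul_nonneg hB0 (Real.exp_pos (μ₁*t)).le]
    exact le_trans habs (by rw [hval] at *; exact e3)

lemma abs_sub_le' (x y : ℝ) : |x - y| ≤ |x| + |y| := by
  rw [sub_eq_add_neg]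
  exact le_trans (abs_add_le _ _) (by rw [abs_neg])

lemma shift_bounds {τ μ₁ μ₂ a b : ℝ} {y : ℝ → ℝ} (hτ : 0 < τ) (hμ₁ : μ₁ < 0)
    (hμ₂0 : 0 < μ₂) (ha : 0 ≤ a) (_hb : 0 ≤ b)
    (hA : ∀ s ≤ 0, |y s| ≤ a * Real.exp (μ₂*s))
    (hB : ∀ s, 0 ≤ s → |y s| ≤ b * Real.exp (μ₁*s)) :
    (∀ t ≤ 0, |y (t-τ)| ≤ a * Real.exp (μ₂*t)) ∧
    (∀ t, 0 ≤ t → |y (t-τ)| ≤ (a+b) * Real.exp (-μ₁*τ) * Real.exp (μ₁*t)) := by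
  constructor
  · intro t ht
    refine le_trans (hA (t-τ) (by linarith)) ?_
    exact mul_le_mul_of_nonneg_left (Real.exp_le_exp.mpr (by nlinarith)) ha
  · intro t ht
    rcases le_total τ t with hc | hc
    · refine le_trans (hB (t-τ) (by linarith)) ?_
      rw [mul_assoc, ← Real.exp_add, show -μ₁*τ + μ₁*t = μ₁*(t-τ) by ring]
      exact mul_le_mul_of_nonneg_right (by linarith) (Real.exp_pos _).le
    · refine le_trans (hA (t-τ) (by linarith)) ?_
      rw [mul_assoc, ← Real.exp_add, show -μ₁*τ + μ₁*t = μ₁*(t-τ) by ring]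
      refine mul_le_mul (by linarith) (Real.exp_le_exp.mpr ?_) (Real.exp_pos _).le
        (by linarith)
      nlinarith

lemma phi_bounds {φ₀ : ℝ → ℝ} (hφ₀mono : StrictMono φ₀)
    (hφ₀bot : Tendsto φ₀ atBot (nhds 0)) (hφ₀top : Tendsto φ₀ atTop (nhds 1)) :
    ∀ x, 0 ≤ φ₀ x ∧ φ₀ x ≤ 1 := by
  intro x
  constructor
  · refine le_of_tendsto hφ₀bot ?_
    filter_upwards [eventually_le_atBot x] with u hu
    exact hφ₀mono.monotone hu
  · refine ge_of_tendsto hφ₀top ?_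
    filter_upwards [eventually_ge_atTop x] with u hu
    exact hφ₀mono.monotone hu

lemma tendsto_weight {μ₁ b t : ℝ} {y : ℝ → ℝ} (hμ₁ : μ₁ < 0) (hb : 0 ≤ b)
    (hB : ∀ s, 0 ≤ s → |y s| ≤ b * Real.exp (μ₁*s)) :
    Tendsto (fun s => Real.exp (t-s) * y s) atTop (nhds 0) := by
  have h11 : μ₁ - 1 < 0 := by linarith
  have hg : Tendsto (fun s : ℝ => Real.exp t * b * Real.exp ((μ₁-1)*s)) atTop (nhds 0) := by
    have h0 : Tendsto (fun s : ℝ => Real.exp ((μ₁-1)*s)) atTop (nhds 0) :=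
      Real.tendsto_exp_atBot.comp (tendsto_id.const_mul_atTop_of_neg h11)
    simpa using h0.const_mul (Real.exp t * b)
  refine squeeze_zero_norm' ?_ hg
  filter_upwards [eventually_ge_atTop (0:ℝ)] with s hs
  rw [Real.norm_eq_abs, abs_mul, Real.abs_exp]
  calc Real.exp (t-s) * |y s| ≤ Real.exp (t-s) * (b * Real.exp (μ₁*s)) :=
        mul_le_mul_of_nonneg_left (hB s hs) (Real.exp_pos _).le
    _ = Real.exp t * b * Real.exp ((μ₁-1)*s) := by
        rw [Real.exp_sub, mul_assoc (Real.exp t)]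
        rw [show Real.exp ((μ₁-1)*s) = Real.exp (μ₁*s) / Real.exp s by
          rw [← Real.exp_sub, show μ₁*s - s = (μ₁-1)*s by ring]]
        field_simp


set_option maxHeartbeats 2000000 in
/-- boundedness of the linear operators `D`, `T`, `J` between
the weighted spaces `C¹_𝔪` and `C_𝔪` with the explicit constants, bijectivity
of `D` with explicit inverse and bound, and the factorization `T = D ∘ J` on
`C¹_𝔪`. -/
theorem operators_bounded_D_bijective_T_eq_DJ
    (τ : ℝ) (hτ : 0 < τ)
    (φ₀ : ℝ → ℝ) (hφ₀mono : StrictMono φ₀)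
    (hφ₀eq : ∀ t, HasDerivAt φ₀ (φ₀ (t - τ) * (1 - φ₀ t)) t)
    (hφ₀bot : Tendsto φ₀ atBot (nhds 0)) (hφ₀top : Tendsto φ₀ atTop (nhds 1))
    (μ₁ μ₂ : ℝ) (hμ₁ : μ₁ < 0) (hμ₂0 : 0 < μ₂) (hμ₂1 : μ₂ < 1) :
    -- (i) D, T : C¹_𝔪 → C_𝔪 and J : C_𝔪 → C_𝔪 are bounded
    (∀ y : ℝ → ℝ, memC1m μ₁ μ₂ y →
      memCm μ₁ μ₂ (Dop y) ∧ Cnorm μ₁ μ₂ (Dop y) ≤ C1norm μ₁ μ₂ y) ∧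
    (∀ y : ℝ → ℝ, memC1m μ₁ μ₂ y →
      memCm μ₁ μ₂ (Topr τ φ₀ y) ∧
      Cnorm μ₁ μ₂ (Topr τ φ₀ y) ≤ (3 + Real.exp (-μ₁ * τ)) * C1norm μ₁ μ₂ y) ∧
    (∀ y : ℝ → ℝ, memCm μ₁ μ₂ y →
      memCm μ₁ μ₂ (Jop τ φ₀ y) ∧
      Cnorm μ₁ μ₂ (Jop τ φ₀ y) ≤
        (3 + (2 + Real.exp (-μ₁ * τ)) / (1 - μ₂) + Real.exp (-μ₁ * τ)) *
          Cnorm μ₁ μ₂ y) ∧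
    -- (ii) D is a bijection from C¹_𝔪 onto C_𝔪 with the explicit inverse
    (∀ g : ℝ → ℝ, memCm μ₁ μ₂ g →
      memC1m μ₁ μ₂ (Dinv g) ∧ (∀ t, Dop (Dinv g) t = g t) ∧
      C1norm μ₁ μ₂ (Dinv g) ≤ (3 + 2 / (1 - μ₂)) * Cnorm μ₁ μ₂ g) ∧
    (∀ y : ℝ → ℝ, memC1m μ₁ μ₂ y → ∀ t, Dinv (Dop y) t = y t) ∧
    -- (iii) T y = D (J y) on C¹_𝔪
    (∀ y : ℝ → ℝ, memC1m μ₁ μ₂ y →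
      ∀ t, Topr τ φ₀ y t = deriv (Jop τ φ₀ y) t - Jop τ φ₀ y t) := by
  have hφc : Continuous φ₀ := continuous_iff_continuousAt.mpr fun x => (hφ₀eq x).continuousAt
  have hφb := phi_bounds hφ₀mono hφ₀bot hφ₀top
  have hE1 : (1:ℝ) ≤ Real.exp (-μ₁*τ) := Real.one_le_exp (by nlinarith)
  have h1μ₂ : (0:ℝ) < 1 - μ₂ := by linarith
  have hu1 : (1:ℝ) ≤ (1-μ₂)⁻¹ := by
    rw [one_le_inv_iff₀]; exact ⟨h1μ₂, by linarith⟩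
  have hLabs : ∀ (y : ℝ → ℝ) (t : ℝ), |Lop τ φ₀ y t| ≤ 2*|y t| + |y (t-τ)| := by
    intro y t
    have h1 := hφb (t-τ); have h2 := hφb t
    have e1 : |(1 + φ₀ (t-τ)) * y t| ≤ 2*|y t| := by
      rw [abs_mul]
      refine mul_le_mul_of_nonneg_right ?_ (abs_nonneg _)
      rw [abs_of_nonneg (by linarith)]; linarith
    have e2 : |(φ₀ t - 1) * y (t-τ)| ≤ |y (t-τ)| := by
      rw [abs_mul]
      have h3 : |φ₀ t - 1| ≤ 1 := abs_le.mpr ⟨by linarith, by linarith⟩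
      nlinarith [abs_nonneg (y (t-τ))]
    calc |Lop τ φ₀ y t| ≤ |(1 + φ₀ (t-τ)) * y t| + |(φ₀ t - 1) * y (t-τ)| := abs_add_le _ _
      _ ≤ 2*|y t| + |y (t-τ)| := by linarith
  have hLcont : ∀ (y : ℝ → ℝ), Continuous y → Continuous (Lop τ φ₀ y) := by
    intro y hy
    have hshift : Continuous fun t : ℝ => t - τ := continuous_id.sub continuous_const
    exact ((continuous_const.add (hφc.comp hshift)).mul hy).add
      ((hφc.sub continuous_const).mul (hy.comp hshift))
  refine ⟨?_, ?_, ?_, ?_, ?_, ?_⟩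
  · -- D bounded
    intro y hy
    obtain ⟨hym, hydiff, hydm⟩ := hy
    obtain ⟨hyA, hyB, ha, hb⟩ := bounds_of_memCm hym
    obtain ⟨hyA', hyB', ha', hb'⟩ := bounds_of_memCm hydm
    have hc : Continuous (Dop y) := hydm.1.sub hym.1
    have hA : ∀ s ≤ 0, |Dop y s| ≤
        (sSup (wIic μ₂ (deriv y)) + sSup (wIic μ₂ y)) * Real.exp (μ₂*s) := by
      intro s hs
      calc |Dop y s| ≤ |deriv y s| + |y s| := abs_sub_le' _ _
        _ ≤ sSup (wIic μ₂ (deriv y)) * Real.exp (μ₂*s)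
            + sSup (wIic μ₂ y) * Real.exp (μ₂*s) := add_le_add (hyA' s hs) (hyA s hs)
        _ = _ := by ring
    have hB : ∀ s, 0 ≤ s → |Dop y s| ≤
        (sSup (wIci μ₁ (deriv y)) + sSup (wIci μ₁ y)) * Real.exp (μ₁*s) := by
      intro s hs
      calc |Dop y s| ≤ |deriv y s| + |y s| := abs_sub_le' _ _
        _ ≤ sSup (wIci μ₁ (deriv y)) * Real.exp (μ₁*s)
            + sSup (wIci μ₁ y) * Real.exp (μ₁*s) := add_le_add (hyB' s hs) (hyB s hs)
        _ = _ := by ring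
    obtain ⟨hmem, -, -, hle⟩ := memCm_of_bounds hc hA hB
    refine ⟨hmem, ?_⟩
    have hC : C1norm μ₁ μ₂ y = (sSup (wIic μ₂ y) + sSup (wIci μ₁ y))
        + (sSup (wIic μ₂ (deriv y)) + sSup (wIci μ₁ (deriv y))) := rfl
    rw [hC]; linarith
  · -- T bounded
    intro y hy
    obtain ⟨hym, hydiff, hydm⟩ := hy
    obtain ⟨hyA, hyB, ha, hb⟩ := bounds_of_memCm hym
    obtain ⟨hyA', hyB', ha', hb'⟩ := bounds_of_memCm hydm
    obtain ⟨hsh1, hsh2⟩ := shift_bounds hτ hμ₁ hμ₂0 ha hb hyA hyB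
    have hc : Continuous (Topr τ φ₀ y) := (hydm.1.sub hym.1).add (hLcont y hym.1)
    have habs : ∀ t, |Topr τ φ₀ y t| ≤ |deriv y t| + |y t| + |y (t-τ)| := by
      intro t
      have h1 := hφb (t-τ); have h2 := hφb t
      have e0 : Topr τ φ₀ y t
          = deriv y t + (φ₀ (t-τ) * y t + (φ₀ t - 1) * y (t-τ)) := by
        simp only [Topr, Lop]; ring
      have e1 : |φ₀ (t-τ) * y t| ≤ |y t| := by
        rw [abs_mul]
        have h3 : |φ₀ (t-τ)| ≤ 1 := abs_le.mpr ⟨by linarith, by linarith⟩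
        nlinarith [abs_nonneg (y t)]
      have e2 : |(φ₀ t - 1) * y (t-τ)| ≤ |y (t-τ)| := by
        rw [abs_mul]
        have h3 : |φ₀ t - 1| ≤ 1 := abs_le.mpr ⟨by linarith, by linarith⟩
        nlinarith [abs_nonneg (y (t-τ))]
      rw [e0]
      calc |deriv y t + (φ₀ (t-τ) * y t + (φ₀ t - 1) * y (t-τ))|
          ≤ |deriv y t| + |φ₀ (t-τ) * y t + (φ₀ t - 1) * y (t-τ)| := abs_add_le _ _
        _ ≤ |deriv y t| + (|φ₀ (t-τ) * y t| + |(φ₀ t - 1) * y (t-τ)|) := by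
            have := abs_add_le (φ₀ (t-τ) * y t) ((φ₀ t - 1) * y (t-τ)); linarith
        _ ≤ |deriv y t| + |y t| + |y (t-τ)| := by linarith
    have hA : ∀ s ≤ 0, |Topr τ φ₀ y s| ≤
        (sSup (wIic μ₂ (deriv y)) + 2 * sSup (wIic μ₂ y)) * Real.exp (μ₂*s) := by
      intro s hs
      have := habs s
      have h1 := hyA' s hs; have h2 := hyA s hs; have h3 := hsh1 s hs
      nlinarith [Real.exp_pos (μ₂*s)]
    have hB : ∀ s, 0 ≤ s → |Topr τ φ₀ y s| ≤
        (sSup (wIci μ₁ (deriv y)) + sSup (wIci μ₁ y)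
          + (sSup (wIic μ₂ y) + sSup (wIci μ₁ y)) * Real.exp (-μ₁*τ))
          * Real.exp (μ₁*s) := by
      intro s hs
      have := habs s
      have h1 := hyB' s hs; have h2 := hyB s hs; have h3 := hsh2 s hs
      nlinarith [Real.exp_pos (μ₁*s)]
    obtain ⟨hmem, -, -, hle⟩ := memCm_of_bounds hc hA hB
    refine ⟨hmem, ?_⟩
    have hC : C1norm μ₁ μ₂ y = (sSup (wIic μ₂ y) + sSup (wIci μ₁ y))
        + (sSup (wIic μ₂ (deriv y)) + sSup (wIci μ₁ (deriv y))) := rfl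
    rw [hC]
    nlinarith [ha, hb, ha', hb', hE1,
      mul_nonneg ha' (by linarith : (0:ℝ) ≤ Real.exp (-μ₁*τ)),
      mul_nonneg hb' (by linarith : (0:ℝ) ≤ Real.exp (-μ₁*τ))]
  · -- J bounded
    intro y hym
    obtain ⟨hyA, hyB, ha, hb⟩ := bounds_of_memCm hym
    obtain ⟨hsh1, hsh2⟩ := shift_bounds hτ hμ₁ hμ₂0 ha hb hyA hyB
    have hgc : Continuous (Lop τ φ₀ y) := hLcont y hym.1
    have hgA : ∀ s ≤ 0, |Lop τ φ₀ y s| ≤ (3 * sSup (wIic μ₂ y)) * Real.exp (μ₂*s) := by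
      intro s hs
      have := hLabs y s
      have h2 := hyA s hs; have h3 := hsh1 s hs
      nlinarith [Real.exp_pos (μ₂*s)]
    have hgB : ∀ s, 0 ≤ s → |Lop τ φ₀ y s| ≤
        (2 * sSup (wIci μ₁ y)
          + (sSup (wIic μ₂ y) + sSup (wIci μ₁ y)) * Real.exp (-μ₁*τ)) * Real.exp (μ₁*s) := by
      intro s hs
      have := hLabs y s
      have h2 := hyB s hs; have h3 := hsh2 s hs
      nlinarith [Real.exp_pos (μ₁*s)]
    have hgA0 : (0:ℝ) ≤ 3 * sSup (wIic μ₂ y) := by linarith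
    have hgB0 : (0:ℝ) ≤ 2 * sSup (wIci μ₁ y)
        + (sSup (wIic μ₂ y) + sSup (wIci μ₁ y)) * Real.exp (-μ₁*τ) := by
      nlinarith [Real.exp_pos (-μ₁*τ)]
    obtain ⟨hint, hDneg, hDpos⟩ := Dinv_bounds hμ₁ hμ₂0 hμ₂1 hgc hgA0 hgB0 hgA hgB
    have hDc : Continuous (Dinv (Lop τ φ₀ y)) := continuous_iff_continuousAt.mpr
      fun t => (Dinv_hasDerivAt hgc hint t).differentiableAt.continuousAt
    have hJrepr : Jop τ φ₀ y = fun u => y u + Dinv (Lop τ φ₀ y) u := by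
      funext u; simp only [Jop, Dinv]; ring
    have hJc : Continuous (Jop τ φ₀ y) := by rw [hJrepr]; exact hym.1.add hDc
    have hA : ∀ s ≤ 0, |Jop τ φ₀ y s| ≤
        (sSup (wIic μ₂ y) + ((3 * sSup (wIic μ₂ y))/(1-μ₂)
          + (2 * sSup (wIci μ₁ y)
            + (sSup (wIic μ₂ y) + sSup (wIci μ₁ y)) * Real.exp (-μ₁*τ))))
          * Real.exp (μ₂*s) := by
      intro s hs
      have h1 := hyA s hs; have h2 := hDneg s hs
      have h3 : |Jop τ φ₀ y s| ≤ |y s| + |Dinv (Lop τ φ₀ y) s| := by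
        rw [hJrepr]; exact abs_add_le _ _
      nlinarith [Real.exp_pos (μ₂*s)]
    have hB : ∀ s, 0 ≤ s → |Jop τ φ₀ y s| ≤
        (sSup (wIci μ₁ y) + (2 * sSup (wIci μ₁ y)
          + (sSup (wIic μ₂ y) + sSup (wIci μ₁ y)) * Real.exp (-μ₁*τ)))
          * Real.exp (μ₁*s) := by
      intro s hs
      have h1 := hyB s hs; have h2 := hDpos s hs
      have h3 : |Jop τ φ₀ y s| ≤ |y s| + |Dinv (Lop τ φ₀ y) s| := by
        rw [hJrepr]; exact abs_add_le _ _
      nlinarith [Real.exp_pos (μ₁*s)]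
    obtain ⟨hmem, -, -, hle⟩ := memCm_of_bounds hJc hA hB
    refine ⟨hmem, ?_⟩
    have hC : Cnorm μ₁ μ₂ y = sSup (wIic μ₂ y) + sSup (wIci μ₁ y) := rfl
    rw [hC]
    simp only [div_eq_mul_inv] at *
    nlinarith [ha, hb, hE1, hu1,
      mul_nonneg (mul_nonneg ha (by linarith : (0:ℝ) ≤ Real.exp (-μ₁*τ) - 1)) (by linarith : (0:ℝ) ≤ (1-μ₂)⁻¹ - 1),
      mul_nonneg (mul_nonneg hb (by linarith : (0:ℝ) ≤ Real.exp (-μ₁*τ) - 1)) (by linarith : (0:ℝ) ≤ (1-μ₂)⁻¹ - 1),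
      mul_nonneg hb (by linarith : (0:ℝ) ≤ (1-μ₂)⁻¹ - 1),
      mul_nonneg ha (by linarith : (0:ℝ) ≤ (1-μ₂)⁻¹ - 1)]
  · -- D⁻¹
    intro g hgm
    obtain ⟨hgA, hgB, ha, hb⟩ := bounds_of_memCm hgm
    obtain ⟨hint, hDneg, hDpos⟩ := Dinv_bounds hμ₁ hμ₂0 hμ₂1 hgm.1 ha hb hgA hgB
    have hD := Dinv_hasDerivAt hgm.1 hint
    have hDdiff : Differentiable ℝ (Dinv g) := fun t => (hD t).differentiableAt
    have hDc : Continuous (Dinv g) := hDdiff.continuous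
    have hde : deriv (Dinv g) = fun t => Dinv g t + g t := funext fun t => (hD t).deriv
    have hA0 : (0:ℝ) ≤ sSup (wIic μ₂ g)/(1-μ₂) + sSup (wIci μ₁ g) := by positivity
    obtain ⟨hmem1, -, -, hle1⟩ := memCm_of_bounds (f := Dinv g) hDc
      (fun s hs => hDneg s hs) (fun s hs => hDpos s hs)
    have hA' : ∀ s ≤ 0, |deriv (Dinv g) s| ≤
        ((sSup (wIic μ₂ g)/(1-μ₂) + sSup (wIci μ₁ g)) + sSup (wIic μ₂ g))
          * Real.exp (μ₂*s) := by
      intro s hs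
      rw [hde]
      have h1 := hDneg s hs; have h2 := hgA s hs
      calc |Dinv g s + g s| ≤ |Dinv g s| + |g s| := abs_add_le _ _
        _ ≤ _ := by nlinarith [Real.exp_pos (μ₂*s)]
    have hB' : ∀ s, 0 ≤ s → |deriv (Dinv g) s| ≤
        (sSup (wIci μ₁ g) + sSup (wIci μ₁ g)) * Real.exp (μ₁*s) := by
      intro s hs
      rw [hde]
      have h1 := hDpos s hs; have h2 := hgB s hs
      calc |Dinv g s + g s| ≤ |Dinv g s| + |g s| := abs_add_le _ _
        _ ≤ _ := by nlinarith [Real.exp_pos (μ₁*s)]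
    have hdc : Continuous (deriv (Dinv g)) := by rw [hde]; exact hDc.add hgm.1
    obtain ⟨hmem2, -, -, hle2⟩ := memCm_of_bounds hdc hA' hB'
    refine ⟨⟨hmem1, hDdiff, hmem2⟩, fun t => ?_, ?_⟩
    · simp only [Dop]; rw [(hD t).deriv]; ring
    · have hC : C1norm μ₁ μ₂ (Dinv g)
          = Cnorm μ₁ μ₂ (Dinv g) + Cnorm μ₁ μ₂ (deriv (Dinv g)) := rfl
      have hC2 : Cnorm μ₁ μ₂ g = sSup (wIic μ₂ g) + sSup (wIci μ₁ g) := rfl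
      rw [hC, hC2]
      simp only [div_eq_mul_inv] at *
      nlinarith [ha, hb, hu1, mul_nonneg hb (by linarith : (0:ℝ) ≤ (1-μ₂)⁻¹ - 1),
        mul_nonneg ha (by linarith : (0:ℝ) ≤ (1-μ₂)⁻¹ - 1)]
  · -- Dinv ∘ Dop = id
    intro y hy t
    obtain ⟨hym, hydiff, hydm⟩ := hy
    obtain ⟨hyA, hyB, ha, hb⟩ := bounds_of_memCm hym
    obtain ⟨hyA', hyB', ha', hb'⟩ := bounds_of_memCm hydm
    have hc : Continuous (Dop y) := hydm.1.sub hym.1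
    have hDA : ∀ s ≤ 0, |Dop y s| ≤
        (sSup (wIic μ₂ (deriv y)) + sSup (wIic μ₂ y)) * Real.exp (μ₂*s) := by
      intro s hs
      calc |Dop y s| ≤ |deriv y s| + |y s| := abs_sub_le' _ _
        _ ≤ _ := by nlinarith [hyA' s hs, hyA s hs]
    have hDB : ∀ s, 0 ≤ s → |Dop y s| ≤
        (sSup (wIci μ₁ (deriv y)) + sSup (wIci μ₁ y)) * Real.exp (μ₁*s) := by
      intro s hs
      calc |Dop y s| ≤ |deriv y s| + |y s| := abs_sub_le' _ _
        _ ≤ _ := by nlinarith [hyB' s hs, hyB s hs]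
    obtain ⟨hint, -, -⟩ := Dinv_bounds hμ₁ hμ₂0 hμ₂1 hc (by linarith) (by linarith) hDA hDB
    have hFi : IntegrableOn (fun s => Real.exp (t-s) * Dop y s) (Ioi t) := by
      have h1 : IntegrableOn (fun s => Real.exp t * (Real.exp (-s) * Dop y s)) (Ici t) :=
        (hint t).const_mul _
      have h2 : IntegrableOn (fun s => Real.exp (t-s) * Dop y s) (Ici t) :=
        h1.congr_fun (fun s _ => by
          beta_reduce; rw [← mul_assoc, ← Real.exp_add, show t + -s = t - s by ring]) measurableSet_Ici
      exact h2.mono Ioi_subset_Ici_self le_rfl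
    have hderiv : ∀ x ∈ Ici t, HasDerivAt (fun s => Real.exp (t-s) * y s)
        (Real.exp (t-x) * Dop y x) x := by
      intro x _
      have h1 : HasDerivAt (fun s : ℝ => t - s) (-1) x := (hasDerivAt_id x).const_sub t
      have h3 := h1.exp.mul (hydiff x).hasDerivAt
      have he : Real.exp (t-x) * Dop y x
          = Real.exp (t-x) * (-1) * y x + Real.exp (t-x) * deriv y x := by
        simp only [Dop]; ring
      rw [he]
      exact h3
    have htend : Tendsto (fun s => Real.exp (t-s) * y s) atTop (nhds 0) :=
      tendsto_weight hμ₁ hb hyB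
    have hval := integral_Ioi_of_hasDerivAt_of_tendsto' hderiv hFi htend
    simp only [Dinv]
    rw [MeasureTheory.integral_Ici_eq_integral_Ioi, hval]
    simp
  · -- T = D ∘ J
    intro y hy t
    obtain ⟨hym, hydiff, hydm⟩ := hy
    obtain ⟨hyA, hyB, ha, hb⟩ := bounds_of_memCm hym
    obtain ⟨hsh1, hsh2⟩ := shift_bounds hτ hμ₁ hμ₂0 ha hb hyA hyB
    have hgc : Continuous (Lop τ φ₀ y) := hLcont y hym.1
    have hgA : ∀ s ≤ 0, |Lop τ φ₀ y s| ≤ (3 * sSup (wIic μ₂ y)) * Real.exp (μ₂*s) := by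
      intro s hs
      have := hLabs y s
      nlinarith [hyA s hs, hsh1 s hs, Real.exp_pos (μ₂*s)]
    have hgB : ∀ s, 0 ≤ s → |Lop τ φ₀ y s| ≤
        (2 * sSup (wIci μ₁ y)
          + (sSup (wIic μ₂ y) + sSup (wIci μ₁ y)) * Real.exp (-μ₁*τ)) * Real.exp (μ₁*s) := by
      intro s hs
      have := hLabs y s
      nlinarith [hyB s hs, hsh2 s hs, Real.exp_pos (μ₁*s)]
    have hgA0 : (0:ℝ) ≤ 3 * sSup (wIic μ₂ y) := by linarith
    have hgB0 : (0:ℝ) ≤ 2 * sSup (wIci μ₁ y)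
        + (sSup (wIic μ₂ y) + sSup (wIci μ₁ y)) * Real.exp (-μ₁*τ) := by
      nlinarith [Real.exp_pos (-μ₁*τ)]
    obtain ⟨hint, -, -⟩ := Dinv_bounds hμ₁ hμ₂0 hμ₂1 hgc hgA0 hgB0 hgA hgB
    have hD := Dinv_hasDerivAt hgc hint
    have hJrepr : Jop τ φ₀ y = fun u => y u + Dinv (Lop τ φ₀ y) u := by
      funext u; simp only [Jop, Dinv]; ring
    have hJd : HasDerivAt (Jop τ φ₀ y)
        (deriv y t + (Dinv (Lop τ φ₀ y) t + Lop τ φ₀ y t)) t := by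
      rw [hJrepr]; exact ((hydiff t).hasDerivAt).add (hD t)
    rw [hJd.deriv, hJrepr]
    simp only [Topr]
    ring
end
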